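/- arXiv:1706.00163 — 5 statements merged into one kernel-verified Lean document; each statement's English description precedes it below -/
import Mathlib

section
/- Let B be an N×N real matrix and C_E an N×N real symmetric positive semidefinite matrix; for l ∈ ℕ set C(l) = B^l C_E (B^T)^l. Let e_1,…,e_k be random vectors in ℝ^N with E[e_i] = 0 and E[e_i e_j^T] = δ_{ij} C_E for all i,j. Let G be a real k×n matrix (k ≤ n) of rank k, let l_1,…,l_n ∈ ℕ be such that trace(C(l_i)) > 0 for every i, and set Λ = diag(trace(C(l_1)),…,trace(C(l_n))). Define the encoded errors ε_i = Σ_{j=1}^k G_{ji} e_j for i = 1,…,n, the decoding matrix L = (G Λ^{-1} G^T)^{-1} G Λ^{-1} (the matrix G Λ^{-1} G^T is invertible since G has rank k and Λ is positive definite), and the decoded error matrix E = [B^{l_1} ε_1, …, B^{l_n} ε_n] · L^T (an N×k random matrix). Then E[‖E‖_F^2] ≤ σ_max(G^T G) · trace((G Λ^{-1} G^T)^{-1}), where ‖·‖_F is the Frobenius norm and σ_max(G^T G) is the largest eigenvalue of G^T G. In particular, if G has orthonormal rows (G G^T = I_k), then E[‖E‖_F^2] ≤ trace((G Λ^{-1}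 G^T)^{-1}). -/
open MeasureTheory Matrix
open scoped BigOperators

/-- `C(l) = Bˡ C_E (Bᵀ)ˡ`. -/
noncomputable def matC {N : ℕ} (B CE : Matrix (Fin N) (Fin N) ℝ) (l : ℕ) :
    Matrix (Fin N) (Fin N) ℝ := B ^ l * CE * (Bᵀ) ^ l

/-- largest eigenvalue of a real symmetric matrix. -/
noncomputable def maxEigR {n : ℕ} (A : Matrix (Fin n) (Fin n) ℝ) : ℝ :=
  if h : A.IsHermitian then ⨆ i, h.eigenvalues i else 0



-- Rayleigh bound
lemma rayleigh_bound {m : ℕ} [NeZero m] (A : Matrix (Fin m) (Fin m) ℝ)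
    (hA : A.IsHermitian) (v : Fin m → ℝ) :
    v ⬝ᵥ (A *ᵥ v) ≤ (⨆ i, hA.eigenvalues i) * (v ⬝ᵥ v) := by
  classical
  set U : Matrix (Fin m) (Fin m) ℝ := (hA.eigenvectorUnitary : Matrix (Fin m) (Fin m) ℝ) with hU
  have hspec := hA.spectral_theorem
  set w : Fin m → ℝ := star U *ᵥ v with hw
  have hvU : v ᵥ* U = w := by
    funext j
    simp [hw, vecMul, mulVec, dotProduct, mul_comm, Matrix.star_apply]
  have h1 : v ⬝ᵥ (A *ᵥ v) = ∑ i, hA.eigenvalues i * (w i)^2 := by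
    conv_lhs => rw [hspec, Unitary.conjStarAlgAut_apply]
    rw [← Matrix.mulVec_mulVec, ← Matrix.mulVec_mulVec, Matrix.dotProduct_mulVec, hvU]
    simp [mulVec_diagonal, dotProduct, RCLike.ofReal_real_eq_id]
    ring_nf
    exact Finset.sum_congr rfl fun i _ => by ring
  have h2 : v ⬝ᵥ v = ∑ i, (w i)^2 := by
    have hUU : U * star U = 1 := by
      exact (Matrix.mem_unitaryGroup_iff).mp hA.eigenvectorUnitary.2
    calc v ⬝ᵥ v = v ⬝ᵥ ((U * star U) *ᵥ v) := by rw [hUU]; simp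
      _ = (v ᵥ* U) ⬝ᵥ (star U *ᵥ v) := by
          rw [← Matrix.mulVec_mulVec, Matrix.dotProduct_mulVec]
      _ = ∑ i, (w i)^2 := by rw [hvU, ← hw]; simp [dotProduct, sq]
  rw [h1, h2, Finset.mul_sum]
  refine Finset.sum_le_sum fun i _ => ?_
  have : hA.eigenvalues i ≤ ⨆ i, hA.eigenvalues i :=
    le_ciSup (Set.Finite.bddAbove (Set.finite_range _)) i
  nlinarith [sq_nonneg (w i)]


lemma mulVec_surjective_of_rank' {k n : ℕ} (G : Matrix (Fin k) (Fin n) ℝ)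
    (hG : G.rank = k) : Function.Surjective (G.mulVecLin) := by
  rw [← LinearMap.range_eq_top]
  apply Submodule.eq_top_of_finrank_eq
  rw [Matrix.rank] at hG
  simp [hG]

lemma transpose_mulVec_eq_zero' {k n : ℕ} (G : Matrix (Fin k) (Fin n) ℝ)
    (hG : G.rank = k) (x : Fin k → ℝ) (hx : Gᵀ *ᵥ x = 0) : x = 0 := by
  obtain ⟨z, hz⟩ := mulVec_surjective_of_rank' G hG x
  have h0 : x ⬝ᵥ x = 0 := by
    have h1 : x ⬝ᵥ (G *ᵥ z) = (x ᵥ* G) ⬝ᵥ z := (Matrix.dotProduct_mulVec x G z)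
    rw [Matrix.mulVecLin_apply] at hz
    rw [hz] at h1
    rw [h1, ← Matrix.mulVec_transpose, hx, zero_dotProduct]
  exact dotProduct_self_eq_zero.mp h0

lemma H_posdef {k n : ℕ} (G : Matrix (Fin k) (Fin n) ℝ) (hG : G.rank = k)
    (d : Fin n → ℝ) (hd : ∀ i, 0 < d i) :
    (G * (Matrix.diagonal d)⁻¹ * Gᵀ).PosDef := by
  classical
  have hinv : (Matrix.diagonal d)⁻¹ = Matrix.diagonal (fun i => (d i)⁻¹) := by
    apply Matrix.inv_eq_right_inv
    rw [Matrix.diagonal_mul_diagonal, ← Matrix.diagonal_one]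
    have h1 : (fun i => d i * (d i)⁻¹) = fun _ : Fin n => (1:ℝ) :=
      funext fun i => mul_inv_cancel₀ (hd i).ne'
    rw [h1]
  refine Matrix.posDef_iff_dotProduct_mulVec.mpr ⟨?_, ?_⟩
  · unfold Matrix.IsHermitian
    rw [conjTranspose_eq_transpose_of_trivial, Matrix.transpose_mul, Matrix.transpose_mul,
      Matrix.transpose_transpose, hinv, Matrix.diagonal_transpose, Matrix.mul_assoc]
  · intro x hx
    have hy : Gᵀ *ᵥ x ≠ 0 := fun h => hx (transpose_mulVec_eq_zero' G hG x h)
    have key : (star x) ⬝ᵥ ((G * (Matrix.diagonal d)⁻¹ * Gᵀ) *ᵥ x)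
        = ∑ i, (d i)⁻¹ * ((Gᵀ *ᵥ x) i)^2 := by
      rw [show star x = x from rfl, Matrix.mul_assoc, ← Matrix.mulVec_mulVec,
        Matrix.dotProduct_mulVec, ← Matrix.mulVec_transpose, hinv]
      rw [← Matrix.mulVec_mulVec]
      simp [Matrix.mulVec_diagonal, dotProduct, sq]
      exact Finset.sum_congr rfl fun i _ => by ring
    rw [key]
    obtain ⟨i0, hi0⟩ := Function.ne_iff.mp hy
    apply Finset.sum_pos' (fun i _ => mul_nonneg (inv_pos.mpr (hd i)).le (sq_nonneg _))
    exact ⟨i0, Finset.mem_univ _, mul_pos (inv_pos.mpr (hd i0)) (by exact pow_pos (abs_pos.mpr hi0) 2 |>.trans_eq (by rw [sq_abs]))⟩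


lemma trace_LdLt {k n : ℕ} (L : Matrix (Fin k) (Fin n) ℝ) (d : Fin n → ℝ) :
    ∑ i, (∑ c, (L c i)^2) * d i = (L * Matrix.diagonal d * Lᵀ).trace := by
  rw [Matrix.trace]
  simp only [Matrix.diag, Matrix.mul_apply, Matrix.mul_diagonal, Matrix.transpose_apply]
  rw [Finset.sum_comm]
  refine Finset.sum_congr rfl fun i _ => ?_
  rw [Finset.sum_mul]
  refine Finset.sum_congr rfl fun c _ => ?_
  simp [Matrix.diagonal_apply, mul_ite, mul_zero, Finset.sum_ite_eq, Finset.sum_ite_eq']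
  ring

lemma LdLt_eq_inv {k n : ℕ} (G : Matrix (Fin k) (Fin n) ℝ) (d : Fin n → ℝ)
    (hd : ∀ i, 0 < d i)
    (hH : IsUnit (G * (Matrix.diagonal d)⁻¹ * Gᵀ).det)
    (hHsym : (G * (Matrix.diagonal d)⁻¹ * Gᵀ)ᵀ = G * (Matrix.diagonal d)⁻¹ * Gᵀ) :
    ((G * (Matrix.diagonal d)⁻¹ * Gᵀ)⁻¹ * G * (Matrix.diagonal d)⁻¹) * Matrix.diagonal d *
      ((G * (Matrix.diagonal d)⁻¹ * Gᵀ)⁻¹ * G * (Matrix.diagonal d)⁻¹)ᵀ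
    = (G * (Matrix.diagonal d)⁻¹ * Gᵀ)⁻¹ := by
  set Λ : Matrix (Fin n) (Fin n) ℝ := Matrix.diagonal d with hΛ
  set H := G * Λ⁻¹ * Gᵀ with hHdef
  have hΛdet : IsUnit Λ.det := by
    rw [hΛ, Matrix.det_diagonal]
    exact (Finset.prod_pos (fun i _ => hd i)).ne'.isUnit
  have hΛt : Λ⁻¹ᵀ = Λ⁻¹ := by
    rw [Matrix.transpose_nonsing_inv, hΛ, Matrix.diagonal_transpose]
  have hHt : H⁻¹ᵀ = H⁻¹ := by rw [Matrix.transpose_nonsing_inv, hHsym]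
  have hT : (H⁻¹ * G * Λ⁻¹)ᵀ = Λ⁻¹ * Gᵀ * H⁻¹ := by
    rw [Matrix.transpose_mul, Matrix.transpose_mul, hΛt, hHt, Matrix.mul_assoc]
  rw [hT]
  calc H⁻¹ * G * Λ⁻¹ * Λ * (Λ⁻¹ * Gᵀ * H⁻¹)
      = H⁻¹ * G * ((Λ⁻¹ * Λ * Λ⁻¹) * Gᵀ) * H⁻¹ := by
        simp only [Matrix.mul_assoc]
    _ = H⁻¹ * (G * Λ⁻¹ * Gᵀ) * H⁻¹ := by
        rw [Matrix.nonsing_inv_mul _ hΛdet, Matrix.one_mul]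
        simp only [Matrix.mul_assoc]
    _ = H⁻¹ := by
        rw [← hHdef, Matrix.nonsing_inv_mul _ hH, Matrix.one_mul]


lemma sum_gram {ι τ : Type*} [Fintype ι] [Fintype τ] (K : ι → ℝ) (D : τ → ι → ℝ) :
    ∑ p, ∑ q, K p * K q * (∑ s, D s p * D s q) = ∑ s, (∑ p, D s p * K p)^2 := by
  conv_rhs => enter [2, s]; rw [sq, Finset.sum_mul_sum]
  conv_lhs => enter [2, p, 2, q]; rw [Finset.mul_sum]
  conv_lhs => enter [2, p]; rw [Finset.sum_comm]
  conv_lhs => rw [Finset.sum_comm]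
  refine Finset.sum_congr rfl fun s _ => Finset.sum_congr rfl fun p _ =>
    Finset.sum_congr rfl fun q _ => by ring

lemma sum4_factor {α β γ δ : Type*} [Fintype α] [Fintype β] [Fintype γ] [Fintype δ]
    (x : α → δ → ℝ) (y : δ → β → γ → ℝ) :
    ∑ c : α, ∑ a : β, ∑ t : γ, ∑ i : δ, x c i * y i a t
      = ∑ i, (∑ c, x c i) * (∑ a, ∑ t, y i a t) := by
  conv_rhs => enter [2, i]; rw [Finset.sum_mul]
  conv_rhs => enter [2, i, 2, c]; rw [Finset.mul_sum]
  conv_rhs => enter [2, i, 2, c, 2, a]; rw [Finset.mul_sum]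
  conv_lhs => enter [2, c, 2, a]; rw [Finset.sum_comm]
  conv_lhs => enter [2, c]; rw [Finset.sum_comm]
  conv_lhs => rw [Finset.sum_comm]

lemma coded_key
    {N k n : ℕ} (hk : 0 < k) (hkn : k ≤ n)
    (B CE : Matrix (Fin N) (Fin N) ℝ) (hCE : CE.PosSemidef)
    {Ω : Type*} [MeasurableSpace Ω] (μ : Measure Ω) [IsProbabilityMeasure μ]
    (e : Fin k → Ω → Fin N → ℝ)
    (h_meas : ∀ i a, Measurable fun ω => e i ω a)
    (h_int : ∀ i j a b, Integrable (fun ω => e i ω a * e j ω b) μ)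
    (h_mean : ∀ i a, ∫ ω, e i ω a ∂μ = 0)
    (h_cov : ∀ i j a b, ∫ ω, e i ω a * e j ω b ∂μ = if i = j then CE a b else 0)
    (G : Matrix (Fin k) (Fin n) ℝ) (hG : G.rank = k)
    (l : Fin n → ℕ) (hl : ∀ i, 0 < (B ^ (l i) * CE * (Bᵀ) ^ (l i)).trace)
    (Λ : Matrix (Fin n) (Fin n) ℝ)
    (hΛ : Λ = Matrix.diagonal fun i => (B ^ (l i) * CE * (Bᵀ) ^ (l i)).trace)
    (L : Matrix (Fin k) (Fin n) ℝ)
    (hL : L = (G * Λ⁻¹ * Gᵀ)⁻¹ * G * Λ⁻¹)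
    (ε : Fin n → Ω → Fin N → ℝ)
    (hε : ∀ i ω a, ε i ω a = ∑ j, G j i * e j ω a)
    (E : Ω → Matrix (Fin N) (Fin k) ℝ)
    (hE : ∀ ω a c, E ω a c = ∑ i, ((B ^ l i) *ᵥ ε i ω) a * L c i)
    (σ : ℝ) (hσ : ∀ v : Fin n → ℝ, (G *ᵥ v) ⬝ᵥ (G *ᵥ v) ≤ σ * (v ⬝ᵥ v)) :
    (∫ ω, ∑ a, ∑ c, (E ω a c) ^ 2 ∂μ) ≤ σ * ((G * Λ⁻¹ * Gᵀ)⁻¹).trace := by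
  classical
  set d : Fin n → ℝ := fun i => (B ^ (l i) * CE * (Bᵀ) ^ (l i)).trace with hd_def
  have hd : ∀ i, 0 < d i := hl
  obtain ⟨R0, hR0⟩ : ∃ R0 : Matrix (Fin N) (Fin N) ℝ, CE = R0ᴴ * R0 := by
    open MatrixOrder in
    exact ⟨CFC.sqrt CE, by rw [(CFC.sqrt_nonneg CE).posSemidef.1.eq, CFC.sqrt_mul_sqrt_self CE hCE.nonneg]⟩
  have hCER : CE = R0ᵀ * R0 := by
    rw [hR0, conjTranspose_eq_transpose_of_trivial]
  set R : Matrix (Fin N) (Fin N) ℝ := R0 with hRdef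
  -- W i = B^(l i) * Rᵀ
  set W : Fin n → Matrix (Fin N) (Fin N) ℝ := fun i => B ^ (l i) * Rᵀ with hW
  have hWd : ∀ i, (∑ a, ∑ t, (W i a t)^2) = d i := by
    intro i
    have h1 : W i * (W i)ᵀ = B ^ (l i) * CE * (Bᵀ) ^ (l i) := by
      rw [hW]
      rw [Matrix.transpose_mul, Matrix.transpose_transpose, Matrix.transpose_pow]
      rw [hCER]
      noncomm_ring
    have h2 : (W i * (W i)ᵀ).trace = ∑ a, ∑ t, (W i a t)^2 := by
      rw [Matrix.trace]
      simp only [Matrix.diag, Matrix.mul_apply, Matrix.transpose_apply, sq]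
    rw [← h2, h1]
  -- coefficients
  set K : Fin k → Fin N → Fin k → Fin N → ℝ :=
    fun c a j a' => ∑ i, L c i * G j i * ((B ^ l i) a a') with hK
  have hEK : ∀ ω a c, E ω a c = ∑ p : Fin k × Fin N, K c a p.1 p.2 * e p.1 ω p.2 := by
    intro ω a c
    rw [hE]
    simp only [Matrix.mulVec, dotProduct, hε, hK, Fintype.sum_prod_type,
      Finset.mul_sum, Finset.sum_mul]
    conv_rhs => enter [2, j]; rw [Finset.sum_comm]
    conv_rhs => rw [Finset.sum_comm]
    conv_rhs => enter [2, i]; rw [Finset.sum_comm]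
    refine Finset.sum_congr rfl fun i _ => Finset.sum_congr rfl fun a' _ =>
      Finset.sum_congr rfl fun j _ => by ring
  set Dm : (Fin k × Fin N) → (Fin k × Fin N) → ℝ :=
    fun s p => if s.1 = p.1 then R s.2 p.2 else 0 with hDm
  have hcov' : ∀ p q : Fin k × Fin N,
      (∫ ω, e p.1 ω p.2 * e q.1 ω q.2 ∂μ) = ∑ s : Fin k × Fin N, Dm s p * Dm s q := by
    rintro ⟨j, a'⟩ ⟨j', b'⟩
    rw [h_cov, Fintype.sum_prod_type]
    simp only [hDm]
    by_cases h : j = j'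
    · subst h
      simp only [if_pos rfl, if_true]
      have hx : ∀ x : Fin k, (∑ t, (if x = j then R t a' else 0) * (if x = j then R t b' else 0))
          = if x = j then ∑ t, R t a' * R t b' else 0 := by
        intro x
        split_ifs with hx
        · simp
        · simp
      rw [Finset.sum_congr rfl (fun x _ => hx x), Finset.sum_ite_eq' Finset.univ j
        (fun _ => ∑ t, R t a' * R t b'), if_pos (Finset.mem_univ j)]
      conv_lhs => rw [hCER]
      simp [Matrix.mul_apply]
    · rw [if_neg h]
      refine (Finset.sum_eq_zero fun j'' _ => Finset.sum_eq_zero fun t _ => ?_).symm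
      by_cases h1 : j'' = j
      · subst h1
        rw [if_neg h, mul_zero]
      · rw [if_neg h1, zero_mul]
  have hEsq : ∀ ω a c, (E ω a c)^2 = ∑ p : Fin k × Fin N, ∑ q : Fin k × Fin N,
      (K c a p.1 p.2 * K c a q.1 q.2) * (e p.1 ω p.2 * e q.1 ω q.2) := by
    intro ω a c
    rw [hEK, sq, Finset.sum_mul_sum]
    exact Finset.sum_congr rfl fun p _ => Finset.sum_congr rfl fun q _ => by ring
  have hfun : ∀ a c, (fun ω => (E ω a c)^2)
      = fun ω => ∑ p : Fin k × Fin N, ∑ q : Fin k × Fin N,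
        (K c a p.1 p.2 * K c a q.1 q.2) * (e p.1 ω p.2 * e q.1 ω q.2) :=
    fun a c => funext fun ω => hEsq ω a c
  have hInt_term : ∀ (c : Fin k) (a : Fin N) (p q : Fin k × Fin N),
      Integrable (fun ω => (K c a p.1 p.2 * K c a q.1 q.2) * (e p.1 ω p.2 * e q.1 ω q.2)) μ :=
    fun c a p q => (h_int p.1 q.1 p.2 q.2).const_mul _
  have hInt_sq : ∀ a c, Integrable (fun ω => (E ω a c)^2) μ := by
    intro a c; rw [hfun a c]
    exact integrable_finset_sum _ fun p _ => integrable_finset_sum _ fun q _ => hInt_term c a p q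
  have hIac : ∀ a c, (∫ ω, (E ω a c)^2 ∂μ)
      = ∑ p : Fin k × Fin N, ∑ q, (K c a p.1 p.2 * K c a q.1 q.2) * (∑ s, Dm s p * Dm s q) := by
    intro a c
    rw [hfun a c,
      integral_finset_sum _ (fun p _ => integrable_finset_sum _ fun q _ => hInt_term c a p q)]
    refine Finset.sum_congr rfl fun p _ => ?_
    rw [integral_finset_sum _ (fun q _ => hInt_term c a p q)]
    refine Finset.sum_congr rfl fun q _ => ?_
    rw [MeasureTheory.integral_const_mul, hcov' p q]
  have hTotal : (∫ ω, ∑ a, ∑ c, (E ω a c) ^ 2 ∂μ)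
      = ∑ a, ∑ c, ∑ s : Fin k × Fin N, (∑ p : Fin k × Fin N, Dm s p * K c a p.1 p.2)^2 := by
    rw [integral_finset_sum _ (fun a _ => integrable_finset_sum _ fun c _ => hInt_sq a c)]
    refine Finset.sum_congr rfl fun a _ => ?_
    rw [integral_finset_sum _ (fun c _ => hInt_sq a c)]
    refine Finset.sum_congr rfl fun c _ => ?_
    rw [hIac a c, sum_gram (fun p : Fin k × Fin N => K c a p.1 p.2) Dm]
  have hφ : ∀ (c : Fin k) (a : Fin N) (j : Fin k) (t : Fin N),
      (∑ p : Fin k × Fin N, Dm (j, t) p * K c a p.1 p.2)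
        = ∑ i, G j i * (L c i * W i a t) := by
    intro c a j t
    rw [Fintype.sum_prod_type]
    have h1 : ∀ j' : Fin k, (∑ a', Dm (j,t) (j', a') * K c a j' a')
        = if j = j' then ∑ a', R t a' * K c a j a' else 0 := by
      intro j'
      simp only [hDm]
      split_ifs with hj
      · subst hj; rfl
      · simp
    rw [Finset.sum_congr rfl fun j' _ => h1 j', Finset.sum_ite_eq Finset.univ j _,
      if_pos (Finset.mem_univ j)]
    simp only [hK, Finset.mul_sum]
    rw [Finset.sum_comm]
    refine Finset.sum_congr rfl fun i _ => ?_
    have hWi : W i a t = ∑ a', (B ^ l i) a a' * R t a' := by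
      simp [hW, Matrix.mul_apply]
    rw [hWi, Finset.mul_sum, Finset.mul_sum]
    exact Finset.sum_congr rfl fun a' _ => by ring
  have hintegral : (∫ ω, ∑ a, ∑ c, (E ω a c) ^ 2 ∂μ)
      = ∑ c, ∑ a, ∑ j, ∑ t, (∑ i, G j i * (L c i * W i a t))^2 := by
    rw [hTotal, Finset.sum_comm]
    refine Finset.sum_congr rfl fun c _ => Finset.sum_congr rfl fun a _ => ?_
    rw [Fintype.sum_prod_type]
    exact Finset.sum_congr rfl fun j _ => Finset.sum_congr rfl fun t _ => by rw [hφ c a j t]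
  have hbound1 : ∀ (c : Fin k) (a : Fin N) (t : Fin N),
      (∑ j, (∑ i, G j i * (L c i * W i a t))^2)
        ≤ σ * ∑ i, (L c i * W i a t)^2 := by
    intro c a t
    have h := hσ (fun i => L c i * W i a t)
    have e1 : (G *ᵥ (fun i => L c i * W i a t)) ⬝ᵥ (G *ᵥ (fun i => L c i * W i a t))
        = ∑ j, (∑ i, G j i * (L c i * W i a t))^2 := by
      simp [dotProduct, Matrix.mulVec, sq]
    have e2 : (fun i => L c i * W i a t) ⬝ᵥ (fun i => L c i * W i a t)
        = ∑ i, (L c i * W i a t)^2 := by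
      simp [dotProduct, sq]
    rw [e1, e2] at h
    exact h
  have hT2 : (∑ c, ∑ a, ∑ j, ∑ t, (∑ i, G j i * (L c i * W i a t))^2)
      ≤ σ * ∑ i, (∑ c, (L c i)^2) * d i := by
    calc (∑ c, ∑ a, ∑ j, ∑ t, (∑ i, G j i * (L c i * W i a t))^2)
        = ∑ c, ∑ a, ∑ t, ∑ j, (∑ i, G j i * (L c i * W i a t))^2 := by
          conv_lhs => enter [2, c, 2, a]; rw [Finset.sum_comm]
      _ ≤ ∑ c, ∑ a, ∑ t, σ * ∑ i, (L c i * W i a t)^2 := by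
          refine Finset.sum_le_sum fun c _ => Finset.sum_le_sum fun a _ =>
            Finset.sum_le_sum fun t _ => hbound1 c a t
      _ = σ * ∑ c, ∑ a, ∑ t, ∑ i, (L c i)^2 * (W i a t)^2 := by
          simp only [mul_pow, ← Finset.mul_sum]
      _ = σ * ∑ i, (∑ c, (L c i)^2) * (∑ a, ∑ t, (W i a t)^2) := by
          rw [sum4_factor (fun c i => (L c i)^2) (fun i a t => (W i a t)^2)]
      _ = σ * ∑ i, (∑ c, (L c i)^2) * d i := by
          congr 1
          exact Finset.sum_congr rfl fun i _ => by rw [hWd i]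
  rw [hintegral]
  refine hT2.trans ?_
  have hpd := H_posdef G hG d hd
  have hHdet : IsUnit (G * (Matrix.diagonal d)⁻¹ * Gᵀ).det := hpd.det_pos.ne'.isUnit
  have hHsym : (G * (Matrix.diagonal d)⁻¹ * Gᵀ)ᵀ = G * (Matrix.diagonal d)⁻¹ * Gᵀ := by
    have h1 := hpd.1
    rwa [Matrix.IsHermitian, conjTranspose_eq_transpose_of_trivial] at h1
  rw [trace_LdLt L d, hL, hΛ, LdLt_eq_inv G d hd hHdet hHsym]

/-- Theorem 1: MSE bound for the coded linear inverse algorithm.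
Uncorrelated mean-zero errors `e₁,…,e_k` with covariance `C_E`, generator matrix `G`
of rank `k`, per-worker iteration counts `l i` with `trace C(lᵢ) > 0`,
`Λ = diag(trace C(l₁),…,trace C(l_n))`, decoding matrix `L = (G Λ⁻¹ Gᵀ)⁻¹ G Λ⁻¹`,
encoded errors `εᵢ = Σ_j G_{ji} e_j`, decoded error matrix
`E = [B^{l₁} ε₁, …, B^{l_n} ε_n] · Lᵀ`.  Then
`E[‖E‖_F²] ≤ σ_max(GᵀG) · trace((G Λ⁻¹ Gᵀ)⁻¹)`, and if moreover `G Gᵀ = I_k` then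
`E[‖E‖_F²] ≤ trace((G Λ⁻¹ Gᵀ)⁻¹)`. -/
theorem coded_linear_inverse_mse_bound
    {N k n : ℕ} (hk : 0 < k) (hkn : k ≤ n)
    (B CE : Matrix (Fin N) (Fin N) ℝ) (hCE : CE.PosSemidef)
    {Ω : Type*} [MeasurableSpace Ω] (μ : Measure Ω) [IsProbabilityMeasure μ]
    (e : Fin k → Ω → Fin N → ℝ)
    (h_meas : ∀ i a, Measurable fun ω => e i ω a)
    (h_int : ∀ i j a b, Integrable (fun ω => e i ω a * e j ω b) μ)
    (h_mean : ∀ i a, ∫ ω, e i ω a ∂μ = 0)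
    (h_cov : ∀ i j a b, ∫ ω, e i ω a * e j ω b ∂μ = if i = j then CE a b else 0)
    (G : Matrix (Fin k) (Fin n) ℝ) (hG : G.rank = k)
    (l : Fin n → ℕ) (hl : ∀ i, 0 < (matC B CE (l i)).trace)
    (Λ : Matrix (Fin n) (Fin n) ℝ)
    (hΛ : Λ = Matrix.diagonal fun i => (matC B CE (l i)).trace)
    (L : Matrix (Fin k) (Fin n) ℝ)
    (hL : L = (G * Λ⁻¹ * Gᵀ)⁻¹ * G * Λ⁻¹)
    (ε : Fin n → Ω → Fin N → ℝ)
    (hε : ∀ i ω a, ε i ω a = ∑ j, G j i * e j ω a)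
    (E : Ω → Matrix (Fin N) (Fin k) ℝ)
    (hE : ∀ ω a c, E ω a c = ∑ i, ((B ^ l i) *ᵥ ε i ω) a * L c i) :
    (∫ ω, ∑ a, ∑ c, (E ω a c) ^ 2 ∂μ) ≤
        maxEigR (Gᵀ * G) * ((G * Λ⁻¹ * Gᵀ)⁻¹).trace ∧
    (G * Gᵀ = 1 →
      (∫ ω, ∑ a, ∑ c, (E ω a c) ^ 2 ∂μ) ≤ ((G * Λ⁻¹ * Gᵀ)⁻¹).trace) := by
  classical
  haveI : NeZero n := ⟨by omega⟩
  have hl' : ∀ i, 0 < (B ^ (l i) * CE * (Bᵀ) ^ (l i)).trace := by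
    intro i; simpa [matC] using hl i
  have hΛ' : Λ = Matrix.diagonal fun i => (B ^ (l i) * CE * (Bᵀ) ^ (l i)).trace := by
    simpa [matC] using hΛ
  have hherm : (Gᵀ * G).IsHermitian := by
    rw [Matrix.IsHermitian, conjTranspose_eq_transpose_of_trivial, Matrix.transpose_mul,
      Matrix.transpose_transpose]
  have hquad : ∀ v : Fin n → ℝ, (G *ᵥ v) ⬝ᵥ (G *ᵥ v) = v ⬝ᵥ ((Gᵀ * G) *ᵥ v) := by
    intro v
    rw [← Matrix.mulVec_mulVec, Matrix.dotProduct_mulVec v, Matrix.vecMul_transpose]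
  constructor
  · have hσ : ∀ v : Fin n → ℝ, (G *ᵥ v) ⬝ᵥ (G *ᵥ v) ≤ maxEigR (Gᵀ * G) * (v ⬝ᵥ v) := by
      intro v
      rw [hquad v]
      have hm : maxEigR (Gᵀ * G) = ⨆ i, hherm.eigenvalues i := by
        rw [maxEigR, dif_pos hherm]
      rw [hm]
      exact rayleigh_bound _ hherm v
    exact coded_key hk hkn B CE hCE μ e h_meas h_int h_mean h_cov G hG l hl' Λ hΛ' L hL ε hε
      E hE _ hσ
  · intro hGG
    have hσ : ∀ v : Fin n → ℝ, (G *ᵥ v) ⬝ᵥ (G *ᵥ v) ≤ 1 * (v ⬝ᵥ v) := by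
      intro v
      set u := G *ᵥ v with hu
      have h1 : (Gᵀ *ᵥ u) ⬝ᵥ (Gᵀ *ᵥ u) = u ⬝ᵥ u := by
        rw [Matrix.dotProduct_mulVec, Matrix.vecMul_transpose, Matrix.mulVec_mulVec, hGG,
          Matrix.one_mulVec]
      have h2 : u ⬝ᵥ u = (Gᵀ *ᵥ u) ⬝ᵥ v := by
        have h3 := Matrix.dotProduct_mulVec u G v
        rw [← Matrix.mulVec_transpose] at h3
        rw [← hu] at h3
        exact h3
      have hA0 : (0:ℝ) ≤ u ⬝ᵥ u := Finset.sum_nonneg fun i _ => mul_self_nonneg _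
      have hB0 : (0:ℝ) ≤ v ⬝ᵥ v := Finset.sum_nonneg fun i _ => mul_self_nonneg _
      have hCS : ((Gᵀ *ᵥ u) ⬝ᵥ v)^2 ≤ ((Gᵀ *ᵥ u) ⬝ᵥ (Gᵀ *ᵥ u)) * (v ⬝ᵥ v) := by
        have h4 := Finset.sum_mul_sq_le_sq_mul_sq Finset.univ (fun i => (Gᵀ *ᵥ u) i) v
        simpa [dotProduct, pow_two] using h4
      rw [h1, ← h2] at hCS
      by_cases hA : u ⬝ᵥ u = 0
      · rw [hA]; linarith
      · have hApos : 0 < u ⬝ᵥ u := lt_of_le_of_ne hA0 (Ne.symm hA)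
        have h3 : (u ⬝ᵥ u) * (u ⬝ᵥ u) ≤ (u ⬝ᵥ u) * (v ⬝ᵥ v) := by nlinarith [hCS]
        have h4 := le_of_mul_le_mul_left h3 hApos
        linarith
    have hfin := coded_key hk hkn B CE hCE μ e h_meas h_int h_mean h_cov G hG l hl' Λ hΛ' L hL
      ε hε E hE 1 hσ
    simpa using hfin
end

section
/- Let n ≥ 1, 1 ≤ k < n, and w = exp(−2πi/n). Let s_0,…,s_{n−1} be independent real random variables, each with mean μ and variance v, and define s̃_p = (1/n) Σ_{j=0}^{n−1} w^{−pj} s_j for p ∈ ℤ (so s̃_{p+n} = s̃_p). Let J_4 be the (n−k)×(n−k) Hermitian Toeplitz matrix with entries (J_4)_{a,b} = s̃_{b−a} for 0 ≤ a,b ≤ n−k−1 (the lower-right block of F Λ F^H for F the n×n unitary DFT matrix and Λ = diag(s_0,…,s_{n−1})), and let σ_max(J_4) denote its largest eigenvalue. Then for every ε > 0, P(σ_max(J_4) > μ + ε) ≤ (2(n−k) − 1)^2 · v / (n · ε^2). -/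
open MeasureTheory ProbabilityTheory Matrix Complex
open scoped BigOperators

/-- largest eigenvalue of a complex Hermitian matrix. -/
noncomputable def maxEigC {m : ℕ} (A : Matrix (Fin m) (Fin m) ℂ) : ℝ :=
  if h : A.IsHermitian then ⨆ i, h.eigenvalues i else 0

section Aux

theorem gersh_bound' {m : ℕ} (hm : 0 < m) (A : Matrix (Fin m) (Fin m) ℂ)
    (hA : A.IsHermitian) (d R : ℝ)
    (hd : ∀ a, (A a a).re ≤ d)
    (hR : ∀ a, ∑ b ∈ Finset.univ.erase a, ‖A a b‖ ≤ R) :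
    maxEigC A ≤ d + R := by
  have : Nonempty (Fin m) := ⟨⟨0, hm⟩⟩
  rw [maxEigC, dif_pos hA]
  apply ciSup_le
  intro i
  have hx : A *ᵥ ⇑(hA.eigenvectorBasis i) = hA.eigenvalues i • ⇑(hA.eigenvectorBasis i) :=
    hA.mulVec_eigenvectorBasis i
  have hxne : ⇑(hA.eigenvectorBasis i) ≠ 0 := by
    intro h
    have := (hA.eigenvectorBasis).orthonormal.1 i
    rw [show (hA.eigenvectorBasis i : EuclideanSpace ℂ (Fin m)) = 0 from by
      ext j; exact congrFun h j] at this
    simp at this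
  have hev : Module.End.HasEigenvalue (Matrix.toLin' A) ((hA.eigenvalues i : ℂ)) := by
    apply Module.End.hasEigenvalue_of_hasEigenvector (x := ⇑(hA.eigenvectorBasis i))
    constructor
    · rw [Module.End.mem_eigenspace_iff, Matrix.toLin'_apply]
      rw [show Matrix.mulVec A ⇑(hA.eigenvectorBasis i) = _ from hx]
      ext j
      simp [Complex.real_smul]
    · exact hxne
  obtain ⟨a, ha⟩ := eigenvalue_mem_ball hev
  rw [Metric.mem_closedBall, dist_eq_norm] at ha
  have h1 : hA.eigenvalues i - (A a a).re = ((hA.eigenvalues i : ℂ) - A a a).re := by simp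
  have h2 : ((hA.eigenvalues i : ℂ) - A a a).re ≤ ‖(hA.eigenvalues i : ℂ) - A a a‖ :=
    Complex.re_le_norm _
  have := le_trans (le_trans h1.le h2) (le_trans ha (hR a))
  linarith [hd a]

variable {n : ℕ} (hn : 1 ≤ n) {w : ℂ} (hw : w = Complex.exp (-2 * Real.pi * Complex.I / n))

include hw

lemma w_zpow_exp (z : ℤ) : w ^ z = Complex.exp (z * (-2 * Real.pi * Complex.I / n)) := by
  rw [hw, ← Complex.exp_int_mul]

lemma w_norm (z : ℤ) : ‖w ^ z‖ = 1 := by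
  rw [w_zpow_exp hw, Complex.norm_exp]
  have : ((z : ℂ) * (-2 * Real.pi * Complex.I / n)).re = 0 := by
    have : ((z : ℂ) * (-2 * Real.pi * Complex.I / n)) =
        ((z * (-2 * Real.pi) / n : ℝ) : ℂ) * Complex.I := by push_cast; ring
    rw [this]
    simp
  rw [this, Real.exp_zero]

lemma w_conj (z : ℤ) : (starRingEnd ℂ) (w ^ z) = w ^ (-z) := by
  rw [w_zpow_exp hw, w_zpow_exp hw, ← Complex.exp_conj]
  congr 1
  have h1 : ((z : ℂ) * (-2 * Real.pi * Complex.I / n)) =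
      ((z * (-2 * Real.pi) / n : ℝ) : ℂ) * Complex.I := by push_cast; ring
  have h2 : ((-z : ℤ) : ℂ) * (-2 * Real.pi * Complex.I / n) =
      (((-z : ℤ) * (-2 * Real.pi) / n : ℝ) : ℂ) * Complex.I := by push_cast; ring
  rw [h1, h2]
  rw [_root_.map_mul, Complex.conj_ofReal, Complex.conj_I]
  push_cast
  ring

lemma w_ne_zero : w ≠ 0 := by rw [hw]; exact Complex.exp_ne_zero _

include hn

lemma w_sum_zero (p : ℤ) (hp : ¬ ((n : ℤ) ∣ p)) :
    ∑ j : Fin n, w ^ (-p * (j.val : ℤ)) = 0 := by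
  have hn0 : (n : ℂ) ≠ 0 := Nat.cast_ne_zero.2 (by omega)
  set ζ : ℂ := w ^ (-p) with hζ
  have hterm : ∀ j : Fin n, w ^ (-p * (j.val : ℤ)) = ζ ^ (j.val) := by
    intro j
    rw [hζ, ← zpow_natCast (w ^ (-p)) j.val, ← _root_.zpow_mul]
  have hζn : ζ ^ n = 1 := by
    rw [hζ, ← zpow_natCast (w ^ (-p)) n, ← _root_.zpow_mul]
    rw [w_zpow_exp hw]
    rw [show ((-p * n : ℤ) : ℂ) * (-2 * Real.pi * Complex.I / n) =
        ((p : ℂ)) * (2 * Real.pi * Complex.I) * ((n:ℂ)/(n:ℂ)) by push_cast; ring]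
    rw [div_self hn0, mul_one, show ((p:ℂ)) * (2 * Real.pi * Complex.I) =
        ((p:ℤ):ℂ) * (2 * Real.pi * Complex.I) by norm_num, Complex.exp_int_mul]
    rw [Complex.exp_two_pi_mul_I, _root_.one_zpow]
  have hζ1 : ζ ≠ 1 := by
    intro h1
    rw [hζ, w_zpow_exp hw, Complex.exp_eq_one_iff] at h1
    obtain ⟨m, hm⟩ := h1
    apply hp
    have : ((-p : ℤ) : ℂ) * (-2 * Real.pi * Complex.I / n) =
        ((2 * Real.pi * p / n : ℝ):ℂ) * Complex.I := by push_cast; ring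
    rw [this, show (m : ℂ) * (2 * ↑Real.pi * Complex.I) =
        ((2 * Real.pi * m : ℝ):ℂ) * Complex.I by push_cast; ring] at hm
    have hre : (2 * Real.pi * p / n : ℝ) = 2 * Real.pi * m := by
      have := congrArg Complex.im hm
      simpa using this
    have hnR : (n : ℝ) ≠ 0 := Nat.cast_ne_zero.2 (by omega)
    have : (p : ℝ) = n * m := by
      field_simp at hre
      have h2π : (2 * Real.pi) ≠ 0 := by positivity
      have h3 : 2 * Real.pi * (p:ℝ) = 2 * Real.pi * ((n:ℝ) * m) := by
        rw [hre]
      exact mul_left_cancel₀ h2π h3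
    exact ⟨m, by exact_mod_cast this⟩
  calc ∑ j : Fin n, w ^ (-p * (j.val : ℤ)) = ∑ j ∈ Finset.range n, ζ ^ j := by
        rw [Finset.sum_range fun j => ζ ^ j]; exact Finset.sum_congr rfl fun j _ => hterm j
    _ = (ζ ^ n - 1) / (ζ - 1) := geom_sum_eq hζ1 n
    _ = 0 := by rw [hζn]; simp

end Aux

/-- equation (110): concentration of the largest eigenvalue of the
Toeplitz block `J₄`.  With independent real random variables `s₀,…,s_{n-1}` of mean `μ`
and variance `v`, DFT coefficients `s̃_p = (1/n) Σ_j w^{-pj} s_j`, and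
`J₄` the `(n-k) × (n-k)` Hermitian Toeplitz matrix with entries `(J₄)_{a,b} = s̃_{b-a}`,
for every `ε > 0`, `P(σ_max(J₄) > μ + ε) ≤ (2(n-k) - 1)² v / (n ε²)`. -/
theorem toeplitz_block_max_eigenvalue_concentration
    {n k : ℕ} (hn : 1 ≤ n) (hk : 1 ≤ k) (hkn : k < n)
    (w : ℂ) (hw : w = Complex.exp (-2 * Real.pi * Complex.I / n))
    {Ω : Type*} [MeasurableSpace Ω] (P : Measure Ω) [IsProbabilityMeasure P]
    (s : Fin n → Ω → ℝ)
    (hs_meas : ∀ j, Measurable (s j))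
    (hs_indep : iIndepFun s P)
    (μ v : ℝ)
    (hs_int : ∀ j, Integrable (s j) P)
    (hs_sq_int : ∀ j, Integrable (fun ω => (s j ω) ^ 2) P)
    (hs_mean : ∀ j, ∫ ω, s j ω ∂P = μ)
    (hs_var : ∀ j, ∫ ω, (s j ω - μ) ^ 2 ∂P = v)
    (stil : ℤ → Ω → ℂ)
    (hstil : ∀ (p : ℤ) (ω : Ω),
      stil p ω = (1 / (n : ℂ)) * ∑ j : Fin n, w ^ (-p * (j.val : ℤ)) * (s j ω : ℂ))
    (J4 : Ω → Matrix (Fin (n - k)) (Fin (n - k)) ℂ)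
    (hJ4 : ∀ (ω : Ω) (a b : Fin (n - k)), J4 ω a b = stil ((b.val : ℤ) - (a.val : ℤ)) ω) :
    ∀ ε : ℝ, 0 < ε →
      P {ω | μ + ε < maxEigC (J4 ω)} ≤
        ENNReal.ofReal ((2 * ((n : ℝ) - k) - 1) ^ 2 * v / (n * ε ^ 2)) := by
  intro ε hε
  have hm : 0 < n - k := by omega
  have hn0C : (n : ℂ) ≠ 0 := Nat.cast_ne_zero.2 (by omega)
  have hn0R : (n : ℝ) ≠ 0 := Nat.cast_ne_zero.2 (by omega)
  -- centered variables
  set g : Fin n → Ω → ℝ := fun j ω => s j ω - μ with hg_def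
  have hg_meas : ∀ j, Measurable (g j) := fun j => (hs_meas j).sub measurable_const
  have hg_int : ∀ j, Integrable (g j) P := fun j => (hs_int j).sub (integrable_const μ)
  have hg_mean : ∀ j, ∫ ω, g j ω ∂P = 0 := by
    intro j
    rw [hg_def]
    rw [integral_sub (hs_int j) (integrable_const μ), hs_mean j, integral_const]
    simp
  have hprod_int : ∀ j j', Integrable (fun ω => g j ω * g j' ω) P := by
    intro j j'
    by_cases hjj : j = j'
    · subst hjj
      have : (fun ω => g j ω * g j ω) = fun ω => (s j ω) ^ 2 - (2*μ) * s j ω + μ ^ 2 := by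
        funext ω; rw [hg_def]; ring
      rw [this]
      exact ((hs_sq_int j).sub ((hs_int j).const_mul _)).add (integrable_const _)
    · have hind : IndepFun (g j) (g j') P := by
        have := (hs_indep.indepFun hjj).comp
          (measurable_id.sub_const μ) (measurable_id.sub_const μ)
        exact this
      exact hind.integrable_mul (hg_int j) (hg_int j')
  have hprod_val : ∀ j j', ∫ ω, g j ω * g j' ω ∂P = if j = j' then v else 0 := by
    intro j j'
    by_cases hjj : j = j'
    · subst hjj
      rw [if_pos rfl, ← hs_var j]
      congr 1; funext ω; rw [hg_def]; ring
    · rw [if_neg hjj]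
      have hind : IndepFun (g j) (g j') P :=
        (hs_indep.indepFun hjj).comp (measurable_id.sub_const μ) (measurable_id.sub_const μ)
      have := hind.integral_mul_eq_mul_integral (hg_int j).1 (hg_int j').1
      have heq : ∫ ω, g j ω * g j' ω ∂P = (∫ ω, g j ω ∂P) * ∫ ω, g j' ω ∂P := this
      rw [heq, hg_mean j, hg_mean j']
      ring
  have hv0 : 0 ≤ v := by
    rw [← hs_var ⟨0, by omega⟩]
    exact integral_nonneg fun ω => sq_nonneg _
  -- the centered DFT coefficients
  set T : ℤ → Ω → ℂ := fun p ω => (1 / (n : ℂ)) * ∑ j : Fin n, w ^ (-p * (j.val : ℤ)) * (g j ω : ℂ)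
    with hT_def
  have hT_meas : ∀ p, Measurable (T p) := by
    intro p
    exact (Finset.measurable_sum Finset.univ fun j _ =>
      (Complex.measurable_ofReal.comp (hg_meas j)).const_mul _).const_mul _
  -- split of stil
  have hsplit : ∀ (p : ℤ) (ω : Ω), stil p ω
      = T p ω + (μ:ℂ) * ((1 / (n : ℂ)) * ∑ j : Fin n, w ^ (-p * (j.val : ℤ))) := by
    intro p ω
    rw [hstil, hT_def]
    have : ∀ j : Fin n, w ^ (-p * (j.val : ℤ)) * (s j ω : ℂ)
        = w ^ (-p * (j.val : ℤ)) * (g j ω : ℂ) + w ^ (-p * (j.val : ℤ)) * (μ:ℂ) := by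
      intro j
      rw [hg_def]
      push_cast
      ring
    rw [Finset.sum_congr rfl fun j _ => this j, Finset.sum_add_distrib, mul_add,
      ← Finset.sum_mul]
    ring
  have hstil0 : ∀ ω, stil 0 ω = T 0 ω + (μ:ℂ) := by
    intro ω
    rw [hsplit 0 ω]
    congr 1
    have : ∀ j : Fin n, w ^ (-(0:ℤ) * (j.val : ℤ)) = 1 := by
      intro j; norm_num
    rw [Finset.sum_congr rfl fun j _ => this j, Finset.sum_const, Finset.card_univ,
      Fintype.card_fin]
    field_simp
    rw [nsmul_eq_mul, mul_one]
  have hstilp : ∀ p : ℤ, p ≠ 0 → p.natAbs < n → ∀ ω, stil p ω = T p ω := by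
    intro p hp hpn ω
    rw [hsplit p ω, w_sum_zero hn hw p ?_, mul_zero, mul_zero, add_zero]
    intro hdvd
    have h1 := Int.le_of_dvd (abs_pos.mpr hp) ((dvd_abs _ _).2 hdvd)
    have h2 : (n:ℤ) ≤ (p.natAbs : ℤ) := by rwa [Int.abs_eq_natAbs] at h1
    omega
  -- conjugation
  have hT_conj : ∀ (p : ℤ) (ω : Ω), (starRingEnd ℂ) (T p ω) = T (-p) ω := by
    intro p ω
    rw [hT_def]
    simp only [_root_.map_mul, map_sum, Complex.conj_ofReal]
    rw [show (starRingEnd ℂ) (1 / (n:ℂ)) = 1 / (n:ℂ) by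
      rw [map_div₀, _root_.map_one, map_natCast]]
    congr 1
    apply Finset.sum_congr rfl
    intro j _
    rw [w_conj hw]
    congr 1
    ring
  have hT_norm_neg : ∀ (p : ℤ) (ω : Ω), ‖T (-p) ω‖ = ‖T p ω‖ := by
    intro p ω
    rw [← hT_conj]
    exact RCLike.norm_conj _
  -- second moment of T p
  have hTT : ∀ (p : ℤ) (ω : Ω), T p ω * (starRingEnd ℂ) (T p ω)
      = ∑ j : Fin n, ∑ j' : Fin n,
        ((1/(n:ℂ)) * (1/(n:ℂ)) * (w ^ (-p * (j.val:ℤ)) * w ^ (p * (j'.val:ℤ))))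
          * ((g j ω * g j' ω : ℝ) : ℂ) := by
    intro p ω
    rw [hT_conj p ω]
    simp only [hT_def, neg_neg]
    rw [mul_mul_mul_comm, Finset.sum_mul_sum]
    rw [Finset.mul_sum]
    refine Finset.sum_congr rfl fun j _ => ?_
    rw [Finset.mul_sum]
    refine Finset.sum_congr rfl fun j' _ => ?_
    push_cast
    ring
  have hw0 : w ≠ 0 := w_ne_zero hw
  have hTT_int : ∀ p : ℤ, Integrable (fun ω => T p ω * (starRingEnd ℂ) (T p ω)) P := by
    intro p
    rw [show (fun ω => T p ω * (starRingEnd ℂ) (T p ω)) = fun ω => ∑ j : Fin n, ∑ j' : Fin n,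
        ((1/(n:ℂ)) * (1/(n:ℂ)) * (w ^ (-p * (j.val:ℤ)) * w ^ (p * (j'.val:ℤ))))
          * ((g j ω * g j' ω : ℝ) : ℂ) from funext fun ω => hTT p ω]
    apply integrable_finset_sum
    intro j _
    apply integrable_finset_sum
    intro j' _
    exact ((hprod_int j j').ofReal).const_mul _
  have hTT_val : ∀ p : ℤ, ∫ ω, T p ω * (starRingEnd ℂ) (T p ω) ∂P = ((v / n : ℝ) : ℂ) := by
    intro p
    have hFint : ∀ (j j' : Fin n), Integrable (fun ω =>
        ((1/(n:ℂ)) * (1/(n:ℂ)) * (w ^ (-p * (j.val:ℤ)) * w ^ (p * (j'.val:ℤ))))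
          * ((g j ω * g j' ω : ℝ) : ℂ)) P :=
      fun j j' => ((hprod_int j j').ofReal).const_mul _
    have hterm_val : ∀ (j j' : Fin n), ∫ ω,
        ((1/(n:ℂ)) * (1/(n:ℂ)) * (w ^ (-p * (j.val:ℤ)) * w ^ (p * (j'.val:ℤ))))
          * ((g j ω * g j' ω : ℝ) : ℂ) ∂P
        = ((1/(n:ℂ)) * (1/(n:ℂ)) * (w ^ (-p * (j.val:ℤ)) * w ^ (p * (j'.val:ℤ))))
          * (if j = j' then ((v:ℝ):ℂ) else 0) := by
      intro j j'
      rw [integral_const_mul]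
      congr 1
      have hcast : ∫ ω, ((g j ω * g j' ω : ℝ) : ℂ) ∂P
          = (((∫ ω, g j ω * g j' ω ∂P : ℝ)) : ℂ) := integral_ofReal
      rw [hcast, hprod_val j j', apply_ite Complex.ofReal]
      simp
    have hjval : ∀ j : Fin n, ∫ ω, (∑ j' : Fin n,
        ((1/(n:ℂ)) * (1/(n:ℂ)) * (w ^ (-p * (j.val:ℤ)) * w ^ (p * (j'.val:ℤ))))
          * ((g j ω * g j' ω : ℝ) : ℂ)) ∂P
        = (1/(n:ℂ)) * (1/(n:ℂ)) * ((v : ℝ) : ℂ) := by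
      intro j
      have hswap : ∫ ω, (∑ j' : Fin n,
          ((1/(n:ℂ)) * (1/(n:ℂ)) * (w ^ (-p * (j.val:ℤ)) * w ^ (p * (j'.val:ℤ))))
            * ((g j ω * g j' ω : ℝ) : ℂ)) ∂P
          = ∑ j' : Fin n, ∫ ω,
          ((1/(n:ℂ)) * (1/(n:ℂ)) * (w ^ (-p * (j.val:ℤ)) * w ^ (p * (j'.val:ℤ))))
            * ((g j ω * g j' ω : ℝ) : ℂ) ∂P :=
        integral_finset_sum Finset.univ (fun j' _ => hFint j j')
      rw [hswap, Finset.sum_congr rfl fun j' _ => hterm_val j j']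
      simp only [mul_ite, mul_zero]
      rw [Finset.sum_ite_eq (Finset.univ : Finset (Fin n)) j
        (fun j' => ((1/(n:ℂ)) * (1/(n:ℂ)) * (w ^ (-p * (j.val:ℤ)) * w ^ (p * (j'.val:ℤ)))) * ((v:ℝ):ℂ)),
        if_pos (Finset.mem_univ j)]
      have hww : w ^ (-p * (j.val:ℤ)) * w ^ (p * (j.val:ℤ)) = 1 := by
        rw [← zpow_add₀ hw0]
        norm_num
      rw [hww, mul_one]
    have hswap2 : ∫ ω, (∑ j : Fin n, ∑ j' : Fin n,
        ((1/(n:ℂ)) * (1/(n:ℂ)) * (w ^ (-p * (j.val:ℤ)) * w ^ (p * (j'.val:ℤ))))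
          * ((g j ω * g j' ω : ℝ) : ℂ)) ∂P
        = ∑ j : Fin n, ∫ ω, (∑ j' : Fin n,
        ((1/(n:ℂ)) * (1/(n:ℂ)) * (w ^ (-p * (j.val:ℤ)) * w ^ (p * (j'.val:ℤ))))
          * ((g j ω * g j' ω : ℝ) : ℂ)) ∂P :=
      integral_finset_sum Finset.univ (fun j _ =>
        integrable_finset_sum Finset.univ (fun j' _ => hFint j j'))
    calc ∫ ω, T p ω * (starRingEnd ℂ) (T p ω) ∂P
        = ∫ ω, (∑ j : Fin n, ∑ j' : Fin n,
          ((1/(n:ℂ)) * (1/(n:ℂ)) * (w ^ (-p * (j.val:ℤ)) * w ^ (p * (j'.val:ℤ))))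
            * ((g j ω * g j' ω : ℝ) : ℂ)) ∂P := by
          exact congrArg (fun f => ∫ ω, f ω ∂P) (funext fun ω => hTT p ω)
      _ = ∑ j : Fin n, ∫ ω, (∑ j' : Fin n,
          ((1/(n:ℂ)) * (1/(n:ℂ)) * (w ^ (-p * (j.val:ℤ)) * w ^ (p * (j'.val:ℤ))))
            * ((g j ω * g j' ω : ℝ) : ℂ)) ∂P := hswap2
      _ = ∑ _j : Fin n, (1/(n:ℂ)) * (1/(n:ℂ)) * ((v : ℝ) : ℂ) :=
          Finset.sum_congr rfl fun j _ => hjval j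
      _ = ((v / n : ℝ) : ℂ) := by
          rw [Finset.sum_const, Finset.card_univ, Fintype.card_fin]
          push_cast
          field_simp
          rw [nsmul_eq_mul, ← mul_assoc, ← sq, mul_div_assoc', mul_div_right_comm,
            div_self (pow_ne_zero 2 hn0C), one_mul]
  -- norm-squared facts
  have hnormsq_eq : ∀ (p : ℤ) (ω : Ω), ‖T p ω‖ ^ 2 = (T p ω * (starRingEnd ℂ) (T p ω)).re := by
    intro p ω
    rw [Complex.mul_conj, Complex.ofReal_re, Complex.normSq_eq_norm_sq]
  have hTsq_int : ∀ p : ℤ, Integrable (fun ω => ‖T p ω‖ ^ 2) P := by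
    intro p
    rw [show (fun ω => ‖T p ω‖ ^ 2) = fun ω => (T p ω * (starRingEnd ℂ) (T p ω)).re from
      funext fun ω => hnormsq_eq p ω]
    exact (hTT_int p).re
  have hTsq_val : ∀ p : ℤ, ∫ ω, ‖T p ω‖ ^ 2 ∂P = v / n := by
    intro p
    have h1 : ∫ ω, ((‖T p ω‖ ^ 2 : ℝ) : ℂ) ∂P = ((∫ ω, ‖T p ω‖ ^ 2 ∂P : ℝ) : ℂ) :=
      integral_ofReal
    have : ((∫ ω, ‖T p ω‖ ^ 2 ∂P : ℝ) : ℂ) = ((v / n : ℝ) : ℂ) := by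
      rw [← h1, ← hTT_val p]
      congr 1
      funext ω
      rw [Complex.mul_conj]
      simp [Complex.normSq_eq_norm_sq]
    exact_mod_cast this
  -- the dominating random variable Y
  set Y : Ω → ℝ := fun ω => ‖T 0 ω‖ + 2 * ∑ p ∈ Finset.Ico 1 (n - k), ‖T (p : ℤ) ω‖ with hY_def
  set c : ℕ → ℝ := fun p => if p = 0 then 1 else 2 with hc_def
  have hc_nonneg : ∀ p, 0 ≤ c p := by
    intro p; by_cases h : p = 0 <;> simp [hc_def, h]
  have hY_sum : ∀ ω, Y ω = ∑ p ∈ Finset.range (n - k), c p * ‖T (p : ℤ) ω‖ := by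
    intro ω
    rw [hY_def, Finset.range_eq_Ico, Finset.sum_eq_sum_Ico_succ_bot hm]
    have h0 : c 0 = 1 := by rw [hc_def]; simp
    have h2 : ∀ p ∈ Finset.Ico 1 (n - k), c p * ‖T (p:ℤ) ω‖ = 2 * ‖T (p:ℤ) ω‖ := by
      intro p hp
      have : p ≠ 0 := by have := (Finset.mem_Ico.1 hp).1; omega
      simp [hc_def, this]
    rw [Finset.sum_congr rfl h2, h0, ← Finset.mul_sum]
    norm_num
  have hc_sum : ∑ p ∈ Finset.range (n - k), c p = 2 * ((n - k : ℕ) : ℝ) - 1 := by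
    rw [Finset.range_eq_Ico, Finset.sum_eq_sum_Ico_succ_bot hm]
    have h2 : ∀ p ∈ Finset.Ico 1 (n - k), c p = 2 := by
      intro p hp
      have : p ≠ 0 := by have := (Finset.mem_Ico.1 hp).1; omega
      simp [hc_def, this]
    rw [Finset.sum_congr rfl h2, Finset.sum_const, Nat.card_Ico]
    have hc0 : c 0 = 1 := by simp [hc_def]
    have hcast : (((n - k) - 1 : ℕ) : ℝ) = ((n - k : ℕ) : ℝ) - 1 := by
      have h1m : 1 ≤ (n - k) := hm
      push_cast [Nat.cast_sub h1m]
      ring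
    rw [hc0, nsmul_eq_mul, hcast]
    ring
  set C : ℝ := 2 * ((n - k : ℕ) : ℝ) - 1 with hC_def
  have hC_pos : 0 < C := by
    rw [hC_def]
    have : (1 : ℝ) ≤ ((n - k : ℕ) : ℝ) := by exact_mod_cast hm
    linarith
  -- pointwise Cauchy-Schwarz
  have hCS : ∀ ω, Y ω ^ 2 ≤ C * ∑ p ∈ Finset.range (n - k), c p * ‖T (p:ℤ) ω‖ ^ 2 := by
    intro ω
    rw [hY_sum ω]
    have := Finset.sum_mul_sq_le_sq_mul_sq (Finset.range (n - k))
      (fun p => Real.sqrt (c p)) (fun p => Real.sqrt (c p) * ‖T (p:ℤ) ω‖)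
    have he1 : ∀ p ∈ Finset.range (n - k),
        Real.sqrt (c p) * (Real.sqrt (c p) * ‖T (p:ℤ) ω‖) = c p * ‖T (p:ℤ) ω‖ := by
      intro p _
      rw [← mul_assoc, Real.mul_self_sqrt (hc_nonneg p)]
    have he2 : ∀ p ∈ Finset.range (n - k), Real.sqrt (c p) ^ 2 = c p := fun p _ =>
      Real.sq_sqrt (hc_nonneg p)
    have he3 : ∀ p ∈ Finset.range (n - k),
        (Real.sqrt (c p) * ‖T (p:ℤ) ω‖) ^ 2 = c p * ‖T (p:ℤ) ω‖ ^ 2 := by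
      intro p _
      rw [mul_pow, Real.sq_sqrt (hc_nonneg p)]
    rw [Finset.sum_congr rfl he1, Finset.sum_congr rfl he2, Finset.sum_congr rfl he3] at this
    rwa [hc_sum] at this
  -- integrability and integral of the dominating sum
  set Z : Ω → ℝ := fun ω => ∑ p ∈ Finset.range (n - k), c p * ‖T (p:ℤ) ω‖ ^ 2 with hZ_def
  have hZ_int : Integrable Z P := by
    apply integrable_finset_sum
    intro p _
    exact (hTsq_int p).const_mul _
  have hZ_val : ∫ ω, Z ω ∂P = C * (v / n) := by
    have hswap : ∫ ω, (∑ p ∈ Finset.range (n - k), c p * ‖T (p:ℤ) ω‖ ^ 2) ∂P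
        = ∑ p ∈ Finset.range (n - k), ∫ ω, c p * ‖T (p:ℤ) ω‖ ^ 2 ∂P :=
      integral_finset_sum _ fun p _ => (hTsq_int p).const_mul _
    have hval : ∀ p ∈ Finset.range (n - k), ∫ ω, c p * ‖T (p:ℤ) ω‖ ^ 2 ∂P = c p * (v / n) := by
      intro p _
      rw [integral_const_mul, hTsq_val]
    calc ∫ ω, Z ω ∂P = ∑ p ∈ Finset.range (n - k), ∫ ω, c p * ‖T (p:ℤ) ω‖ ^ 2 ∂P := hswap
      _ = ∑ p ∈ Finset.range (n - k), c p * (v / n) := Finset.sum_congr rfl hval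
      _ = C * (v / n) := by rw [← Finset.sum_mul, hc_sum]
  have hY_meas : Measurable Y := by
    rw [hY_def]
    exact ((hT_meas 0).norm.add ((Finset.measurable_sum (Finset.Ico 1 (n - k))
      fun p _ => (hT_meas (p:ℤ)).norm).const_mul 2))
  have hYsq_int : Integrable (fun ω => Y ω ^ 2) P := by
    apply Integrable.mono' (hZ_int.const_mul C)
      ((hY_meas.pow_const 2).aestronglyMeasurable)
    filter_upwards with ω
    show ‖Y ω ^ 2‖ ≤ C * Z ω
    rw [Real.norm_eq_abs, _root_.abs_of_nonneg (sq_nonneg (Y ω))]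
    exact hCS ω
  have hYsq_val : ∫ ω, Y ω ^ 2 ∂P ≤ C ^ 2 * (v / n) := by
    calc ∫ ω, Y ω ^ 2 ∂P ≤ ∫ ω, C * Z ω ∂P :=
          integral_mono hYsq_int (hZ_int.const_mul C) fun ω => hCS ω
      _ = C * (C * (v / n)) := by rw [integral_const_mul, hZ_val]
      _ = C ^ 2 * (v / n) := by ring
  -- Hermitian property
  have hconj_stil : ∀ (q : ℤ) (ω : Ω), (starRingEnd ℂ) (stil q ω) = stil (-q) ω := by
    intro q ω
    rw [hstil, hstil]
    simp only [_root_.map_mul, map_sum, Complex.conj_ofReal]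
    rw [show (starRingEnd ℂ) (1 / (n:ℂ)) = 1 / (n:ℂ) by
      rw [map_div₀, _root_.map_one, map_natCast]]
    congr 1
    apply Finset.sum_congr rfl
    intro j _
    rw [w_conj hw]
    congr 2
    ring
  have hHerm : ∀ ω, (J4 ω).IsHermitian := by
    intro ω
    apply Matrix.IsHermitian.ext
    intro a b
    rw [hJ4, hJ4]
    calc star (stil ((a.val:ℤ) - (b.val:ℤ)) ω)
        = (starRingEnd ℂ) (stil ((a.val:ℤ) - (b.val:ℤ)) ω) := rfl
      _ = stil (-((a.val:ℤ) - (b.val:ℤ))) ω := hconj_stil _ ω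
      _ = stil ((b.val:ℤ) - (a.val:ℤ)) ω := by congr 1; ring
  -- diagonal bound
  have hdiag : ∀ (ω : Ω) (a : Fin (n - k)), ((J4 ω) a a).re ≤ μ + ‖T 0 ω‖ := by
    intro ω a
    rw [hJ4, show ((a.val : ℤ) - (a.val : ℤ)) = 0 by ring, hstil0 ω]
    rw [Complex.add_re, Complex.ofReal_re]
    have := Complex.re_le_norm (T 0 ω)
    linarith
  -- row sum bound
  have hrow : ∀ (ω : Ω) (a : Fin (n - k)),
      ∑ b ∈ Finset.univ.erase a, ‖(J4 ω) a b‖ ≤ 2 * ∑ p ∈ Finset.Ico 1 (n - k), ‖T (p:ℤ) ω‖ := by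
    intro ω a
    have hentry : ∀ b ∈ Finset.univ.erase a, ‖(J4 ω) a b‖ = ‖T ((b.val:ℤ) - (a.val:ℤ)) ω‖ := by
      intro b hb
      have hba : b ≠ a := Finset.ne_of_mem_erase hb
      have hne : (b.val:ℤ) - (a.val:ℤ) ≠ 0 := by
        intro h
        apply hba
        have : b.val = a.val := by omega
        exact Fin.ext this
      have habs : ((b.val:ℤ) - (a.val:ℤ)).natAbs < n := by
        have hb' := b.isLt
        have ha' := a.isLt
        omega
      rw [hJ4, hstilp _ hne habs]
    rw [Finset.sum_congr rfl hentry]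
    -- reindex by the difference
    set e : Fin (n - k) → ℤ := fun b => (b.val:ℤ) - (a.val:ℤ) with he_def
    have he_inj : Set.InjOn e (Finset.univ.erase a) := by
      intro b1 _ b2 _ h
      have h' : (b1.val:ℤ) - (a.val:ℤ) = (b2.val:ℤ) - (a.val:ℤ) := h
      apply Fin.ext
      omega
    have himg : ∑ b ∈ Finset.univ.erase a, ‖T (e b) ω‖
        = ∑ q ∈ (Finset.univ.erase a).image e, ‖T q ω‖ :=
      (Finset.sum_image (f := fun q => ‖T q ω‖) (g := e)
        (fun b1 h1 b2 h2 h => he_inj h1 h2 h)).symm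
    rw [show (∑ b ∈ Finset.univ.erase a, ‖T ((b.val:ℤ) - (a.val:ℤ)) ω‖)
        = ∑ b ∈ Finset.univ.erase a, ‖T (e b) ω‖ from rfl, himg]
    set Spos := (Finset.Ico 1 (n - k)).image (fun p : ℕ => (p : ℤ)) with hSpos
    set Sneg := (Finset.Ico 1 (n - k)).image (fun p : ℕ => -(p : ℤ)) with hSneg
    have hsub : (Finset.univ.erase a).image e ⊆ Spos ∪ Sneg := by
      intro q hq
      obtain ⟨b, hb, hbe⟩ := Finset.mem_image.1 hq
      have hba : b ≠ a := Finset.ne_of_mem_erase hb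
      have hb' := b.isLt
      have ha' := a.isLt
      have hbe' : (b.val:ℤ) - (a.val:ℤ) = q := hbe
      rw [Finset.mem_union]
      by_cases hpos : (0:ℤ) < q
      · left
        rw [hSpos, Finset.mem_image]
        refine ⟨q.toNat, Finset.mem_Ico.2 ⟨?_, ?_⟩, ?_⟩ <;> omega
      · right
        rw [hSneg, Finset.mem_image]
        have hq0 : q ≠ 0 := by
          intro h
          apply hba
          apply Fin.ext
          omega
        refine ⟨(-q).toNat, Finset.mem_Ico.2 ⟨?_, ?_⟩, ?_⟩ <;> omega
    have hstep : ∑ q ∈ (Finset.univ.erase a).image e, ‖T q ω‖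
        ≤ ∑ q ∈ Spos ∪ Sneg, ‖T q ω‖ :=
      Finset.sum_le_sum_of_subset_of_nonneg hsub (fun q _ _ => norm_nonneg _)
    have hdisj : Disjoint Spos Sneg := by
      rw [Finset.disjoint_left]
      intro q hq1 hq2
      rw [hSpos, Finset.mem_image] at hq1
      rw [hSneg, Finset.mem_image] at hq2
      obtain ⟨p1, hp1, hq1⟩ := hq1
      obtain ⟨p2, hp2, hq2⟩ := hq2
      rw [Finset.mem_Ico] at hp1 hp2
      omega
    have hposval : ∑ q ∈ Spos, ‖T q ω‖ = ∑ p ∈ Finset.Ico 1 (n - k), ‖T (p:ℤ) ω‖ := by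
      rw [hSpos]
      apply Finset.sum_image
      intro p1 _ p2 _ h
      simpa using h
    have hnegval : ∑ q ∈ Sneg, ‖T q ω‖ = ∑ p ∈ Finset.Ico 1 (n - k), ‖T (p:ℤ) ω‖ := by
      rw [hSneg]
      rw [Finset.sum_image (fun p1 _ p2 _ h => by omega)]
      exact Finset.sum_congr rfl fun p _ => hT_norm_neg (p:ℤ) ω
    calc ∑ q ∈ (Finset.univ.erase a).image e, ‖T q ω‖ ≤ ∑ q ∈ Spos ∪ Sneg, ‖T q ω‖ := hstep
      _ = ∑ q ∈ Spos, ‖T q ω‖ + ∑ q ∈ Sneg, ‖T q ω‖ := Finset.sum_union hdisj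
      _ = 2 * ∑ p ∈ Finset.Ico 1 (n - k), ‖T (p:ℤ) ω‖ := by rw [hposval, hnegval]; ring
  -- eigenvalue bound
  have hmax : ∀ ω, maxEigC (J4 ω) ≤ μ + Y ω := by
    intro ω
    have h := gersh_bound' hm (J4 ω) (hHerm ω) (μ + ‖T 0 ω‖)
      (2 * ∑ p ∈ Finset.Ico 1 (n - k), ‖T (p:ℤ) ω‖) (hdiag ω) (hrow ω)
    have hYω : Y ω = ‖T 0 ω‖ + 2 * ∑ p ∈ Finset.Ico 1 (n - k), ‖T (p:ℤ) ω‖ := rfl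
    rw [hYω]
    linarith
  -- event inclusion
  have hsub_event : {ω | μ + ε < maxEigC (J4 ω)} ⊆ {ω | ε ^ 2 ≤ Y ω ^ 2} := by
    intro ω hω
    have h1 : μ + ε < μ + Y ω := lt_of_lt_of_le hω (hmax ω)
    have h2 : ε ≤ Y ω := by linarith
    exact pow_le_pow_left₀ hε.le h2 2
  -- Markov
  have hmarkov := mul_meas_ge_le_integral_of_nonneg
    (f := fun ω => Y ω ^ 2) (Filter.Eventually.of_forall fun ω => sq_nonneg _) hYsq_int (ε ^ 2)
  have hfin : P {ω | ε ^ 2 ≤ Y ω ^ 2} ≠ ⊤ := measure_ne_top _ _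
  have htoReal : (P {ω | ε ^ 2 ≤ Y ω ^ 2}).toReal ≤ C ^ 2 * v / (n * ε ^ 2) := by
    have hε2 : (0:ℝ) < ε ^ 2 := by positivity
    have hmain : ε ^ 2 * (P {ω | ε ^ 2 ≤ Y ω ^ 2}).toReal ≤ C ^ 2 * (v / n) :=
      le_trans hmarkov hYsq_val
    calc (P {ω | ε ^ 2 ≤ Y ω ^ 2}).toReal
        ≤ C ^ 2 * (v / n) / ε ^ 2 := by
          rw [le_div_iff₀ hε2]
          nlinarith [hmain]
      _ = C ^ 2 * v / (n * ε ^ 2) := by rw [← mul_div_assoc, div_div]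
  calc P {ω | μ + ε < maxEigC (J4 ω)} ≤ P {ω | ε ^ 2 ≤ Y ω ^ 2} := measure_mono hsub_event
    _ = ENNReal.ofReal ((P {ω | ε ^ 2 ≤ Y ω ^ 2}).toReal) := (ENNReal.ofReal_toReal hfin).symm
    _ ≤ ENNReal.ofReal (C ^ 2 * v / (n * ε ^ 2)) := ENNReal.ofReal_le_ofReal htoReal
    _ = ENNReal.ofReal ((2 * ((n : ℝ) - k) - 1) ^ 2 * v / (n * ε ^ 2)) := by
        have hCeq : C = 2 * ((n : ℝ) - k) - 1 := by
          rw [hC_def]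
          push_cast [Nat.cast_sub hkn.le]
          ring
        rw [hCeq]
end

section
/- Let B = P Θ P^{-1} be an N×N real matrix with P invertible and Θ = diag(γ_1,…,γ_N) a real diagonal matrix, and let C_E be an N×N real symmetric positive definite matrix. Let e_max and e_min denote the largest and smallest eigenvalues of the symmetric positive definite matrix P^{-1} C_E (P^{-1})^T, and let c_max and c_min denote the largest and smallest eigenvalues of P^T P. Then for every l ∈ ℕ, c_min · e_min · Σ_{j=1}^N γ_j^{2l} ≤ trace(B^l C_E (B^T)^l) ≤ c_max · e_max · Σ_{j=1}^N γ_j^{2l}. -/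
open Matrix
open scoped BigOperators

noncomputable def minEigR {n : ℕ} (A : Matrix (Fin n) (Fin n) ℝ) : ℝ :=
  if h : A.IsHermitian then ⨅ i, h.eigenvalues i else 0


-- real conjTranspose = transpose
example (A : Matrix (Fin 3) (Fin 3) ℝ) : Aᴴ = Aᵀ := by
  ext i j; simp [conjTranspose_apply]

-- Lemma A: diagonal entries of a real Hermitian matrix lie between min and max eigenvalue
lemma diag_between {n : ℕ} {A : Matrix (Fin n) (Fin n) ℝ} (h : A.IsHermitian) (j : Fin n) :
    (⨅ i, h.eigenvalues i) ≤ A j j ∧ A j j ≤ ⨆ i, h.eigenvalues i := by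
  haveI : Nonempty (Fin n) := ⟨j⟩
  set U : Matrix (Fin n) (Fin n) ℝ := (h.eigenvectorUnitary : Matrix (Fin n) (Fin n) ℝ) with hU
  have hspec : A = U * Matrix.diagonal h.eigenvalues * star U := by
    have := h.spectral_theorem; simpa using this
  have hAjj : A j j = ∑ k, h.eigenvalues k * (U j k)^2 := by
    conv_lhs => rw [hspec]
    simp [Matrix.mul_apply, Matrix.diagonal, Finset.sum_mul, mul_comm, sq, mul_assoc,
      Matrix.star_apply]
    exact Finset.sum_congr rfl fun k _ => by ring
  have hsum1 : ∑ k, (U j k)^2 = 1 := by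
    have h1 : U * star U = 1 := (Unitary.mem_iff.mp (h.eigenvectorUnitary).2).2
    have := congrArg (fun M => M j j) h1
    simpa [Matrix.mul_apply, Matrix.one_apply, sq, Matrix.star_apply] using this
  constructor
  · calc (⨅ i, h.eigenvalues i) = ∑ k, (⨅ i, h.eigenvalues i) * (U j k)^2 := by
          rw [← Finset.mul_sum, hsum1, mul_one]
    _ ≤ ∑ k, h.eigenvalues k * (U j k)^2 := by
          apply Finset.sum_le_sum
          intro k _
          exact mul_le_mul_of_nonneg_right
            (ciInf_le (Set.Finite.bddBelow (Set.finite_range _)) k) (sq_nonneg _)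
    _ = A j j := hAjj.symm
  · calc A j j = ∑ k, h.eigenvalues k * (U j k)^2 := hAjj
    _ ≤ ∑ k, (⨆ i, h.eigenvalues i) * (U j k)^2 := by
          apply Finset.sum_le_sum
          intro k _
          exact mul_le_mul_of_nonneg_right
            (le_ciSup (Set.Finite.bddAbove (Set.finite_range _)) k) (sq_nonneg _)
    _ = ⨆ i, h.eigenvalues i := by rw [← Finset.mul_sum, hsum1, mul_one]

-- PSD diag nonneg
lemma psd_diag_nonneg {n : ℕ} {S : Matrix (Fin n) (Fin n) ℝ} (hS : S.PosSemidef) (j : Fin n) :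
    0 ≤ S j j := by
  have := hS.dotProduct_mulVec_nonneg (Pi.single j 1)
  simpa [dotProduct, Matrix.mulVec, Pi.single_apply] using this

-- Lemma B: trace bound
lemma trace_mul_between {n : ℕ} {S A : Matrix (Fin n) (Fin n) ℝ}
    (hS : S.PosSemidef) (hA : A.IsHermitian) :
    (⨅ i, hA.eigenvalues i) * S.trace ≤ (S * A).trace ∧
      (S * A).trace ≤ (⨆ i, hA.eigenvalues i) * S.trace := by
  rcases Nat.eq_zero_or_pos n with hn | hn
  · subst hn
    simp [Matrix.trace]
  haveI : Nonempty (Fin n) := Fin.pos_iff_nonempty.mp hn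
  set U : Matrix (Fin n) (Fin n) ℝ := (hA.eigenvectorUnitary : Matrix (Fin n) (Fin n) ℝ) with hU
  have hspec : A = U * Matrix.diagonal hA.eigenvalues * star U := by
    have := hA.spectral_theorem; simpa using this
  set M : Matrix (Fin n) (Fin n) ℝ := star U * S * U with hM
  have hMpsd : M.PosSemidef := by
    have := hS.conjTranspose_mul_mul_same U
    simpa [Matrix.star_eq_conjTranspose, hM] using this
  have htr : (S * A).trace = ∑ j, M j j * hA.eigenvalues j := by
    have h1 : S * A = S * U * Matrix.diagonal hA.eigenvalues * star U := by
      conv_lhs => rw [hspec]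
      noncomm_ring
    rw [h1, Matrix.trace_mul_comm (S * U * Matrix.diagonal hA.eigenvalues) (star U)]
    rw [show star U * (S * U * Matrix.diagonal hA.eigenvalues)
        = M * Matrix.diagonal hA.eigenvalues by rw [hM]; noncomm_ring]
    simp [Matrix.trace, Matrix.mul_diagonal, Matrix.diag]
  have htrM : M.trace = S.trace := by
    have h1 : U * star U = 1 := (Unitary.mem_iff.mp (hA.eigenvectorUnitary).2).2
    rw [hM, Matrix.trace_mul_comm (star U * S) U, ← mul_assoc, h1, one_mul]
  have hdiag : ∀ j, 0 ≤ M j j := psd_diag_nonneg hMpsd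
  constructor
  · rw [htr, ← htrM]
    have : (⨅ i, hA.eigenvalues i) * M.trace = ∑ j, M j j * (⨅ i, hA.eigenvalues i) := by
      rw [Matrix.trace, Finset.mul_sum]
      exact Finset.sum_congr rfl fun j _ => mul_comm _ _
    rw [this]
    exact Finset.sum_le_sum fun j _ => mul_le_mul_of_nonneg_left
      (ciInf_le (Set.Finite.bddBelow (Set.finite_range _)) j) (hdiag j)
  · rw [htr, ← htrM]
    have : (⨆ i, hA.eigenvalues i) * M.trace = ∑ j, M j j * (⨆ i, hA.eigenvalues i) := by
      rw [Matrix.trace, Finset.mul_sum]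
      exact Finset.sum_congr rfl fun j _ => mul_comm _ _
    rw [this]
    exact Finset.sum_le_sum fun j _ => mul_le_mul_of_nonneg_left
      (le_ciSup (Set.Finite.bddAbove (Set.finite_range _)) j) (hdiag j)

/-- inequalities (67)–(70).
If `B = P Θ P⁻¹` with `Θ = diag(γ₁,…,γ_N)` and `C_E` symmetric positive definite, then with
`e_max, e_min` the extreme eigenvalues of `P⁻¹ C_E (P⁻¹)ᵀ` and `c_max, c_min` those of `Pᵀ P`,
for every `l`,
`c_min e_min Σ_j γ_j^{2l} ≤ trace(Bˡ C_E (Bᵀ)ˡ) ≤ c_max e_max Σ_j γ_j^{2l}`. -/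
theorem trace_error_covariance_two_sided_eigenvalue_bounds
    {N : ℕ}
    (P : Matrix (Fin N) (Fin N) ℝ) (hP : IsUnit P.det)
    (γ : Fin N → ℝ)
    (B : Matrix (Fin N) (Fin N) ℝ)
    (hB : B = P * Matrix.diagonal γ * P⁻¹)
    (CE : Matrix (Fin N) (Fin N) ℝ) (hCE : CE.PosDef) :
    ∀ l : ℕ,
      minEigR (Pᵀ * P) * minEigR (P⁻¹ * CE * (P⁻¹)ᵀ) * (∑ j, γ j ^ (2 * l)) ≤
          (B ^ l * CE * (Bᵀ) ^ l).trace ∧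
      (B ^ l * CE * (Bᵀ) ^ l).trace ≤
          maxEigR (Pᵀ * P) * maxEigR (P⁻¹ * CE * (P⁻¹)ᵀ) * (∑ j, γ j ^ (2 * l)) := by
  intro l
  rcases Nat.eq_zero_or_pos N with hN | hN
  · subst hN
    simp [Matrix.trace]
  haveI : Nonempty (Fin N) := Fin.pos_iff_nonempty.mp hN
  have hconj : ∀ (A : Matrix (Fin N) (Fin N) ℝ), Aᴴ = Aᵀ := fun A => by
    ext i j; simp [conjTranspose_apply]
  set M : Matrix (Fin N) (Fin N) ℝ := P⁻¹ * CE * (P⁻¹)ᵀ with hMdef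
  have hMpsd : M.PosSemidef := by
    have := hCE.posSemidef.mul_mul_conjTranspose_same (P⁻¹)
    rwa [hconj] at this
  have hMh : M.IsHermitian := hMpsd.1
  have hPtPpsd : (Pᵀ * P).PosSemidef := by
    have := posSemidef_conjTranspose_mul_self P
    rwa [hconj] at this
  have hPtPh : (Pᵀ * P).IsHermitian := hPtPpsd.1
  have hBl' : B ^ l = P * (Matrix.diagonal γ)^l * P⁻¹ := by
    induction l with
    | zero => simp [Matrix.mul_nonsing_inv P hP]
    | succ k ih =>
        rw [pow_succ, pow_succ, ih, hB]
        rw [show P * (Matrix.diagonal γ)^k * P⁻¹ * (P * Matrix.diagonal γ * P⁻¹)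
            = P * (Matrix.diagonal γ)^k * (P⁻¹ * P) * Matrix.diagonal γ * P⁻¹ by noncomm_ring]
        rw [Matrix.nonsing_inv_mul P hP, mul_one]
        noncomm_ring
  set Dl : Matrix (Fin N) (Fin N) ℝ := Matrix.diagonal (fun j => γ j ^ l) with hDl
  have hBl : B ^ l = P * Dl * P⁻¹ := by
    rw [hBl', Matrix.diagonal_pow]; rfl
  set S : Matrix (Fin N) (Fin N) ℝ := Dl * M * Dl with hS
  have hSpsd : S.PosSemidef := by
    have := hMpsd.mul_mul_conjTranspose_same Dl
    rwa [hconj, hDl, Matrix.diagonal_transpose, ← hDl] at this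
  have hkey : B ^ l * CE * (Bᵀ) ^ l = P * S * Pᵀ := by
    rw [← Matrix.transpose_pow, hBl, Matrix.transpose_mul, Matrix.transpose_mul,
      show Dlᵀ = Dl by rw [hDl, Matrix.diagonal_transpose], hS, hMdef]
    noncomm_ring
  have htr : (B ^ l * CE * (Bᵀ) ^ l).trace = (S * (Pᵀ * P)).trace := by
    rw [hkey, mul_assoc, Matrix.trace_mul_comm P (S * Pᵀ), mul_assoc]
  have htrS : S.trace = ∑ j, M j j * (γ j ^ l)^2 := by
    rw [Matrix.trace]
    refine Finset.sum_congr rfl fun j _ => ?_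
    rw [Matrix.diag]
    rw [hS, hDl, Matrix.mul_apply]
    simp [Matrix.diagonal_mul, Matrix.mul_diagonal, Matrix.diagonal_apply, Finset.sum_ite_eq',
      mul_comm, sq, mul_assoc]
  -- bounds on trace S
  have hlow : minEigR M * (∑ j, γ j ^ (2 * l)) ≤ S.trace := by
    rw [minEigR, dif_pos hMh, htrS, Finset.mul_sum]
    refine Finset.sum_le_sum fun j _ => ?_
    rw [show γ j ^ (2 * l) = (γ j ^ l)^2 by rw [← pow_mul, mul_comm]]
    exact mul_le_mul_of_nonneg_right (diag_between hMh j).1 (sq_nonneg _)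
  have hhigh : S.trace ≤ maxEigR M * (∑ j, γ j ^ (2 * l)) := by
    rw [maxEigR, dif_pos hMh, htrS, Finset.mul_sum]
    refine Finset.sum_le_sum fun j _ => ?_
    rw [show γ j ^ (2 * l) = (γ j ^ l)^2 by rw [← pow_mul, mul_comm]]
    exact mul_le_mul_of_nonneg_right (diag_between hMh j).2 (sq_nonneg _)
  have hB1 := trace_mul_between hSpsd hPtPh
  have hcmin_nonneg : 0 ≤ minEigR (Pᵀ * P) := by
    rw [minEigR, dif_pos hPtPh]
    exact le_ciInf fun i => hPtPpsd.eigenvalues_nonneg i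
  have hcmax_nonneg : 0 ≤ maxEigR (Pᵀ * P) := by
    rw [maxEigR, dif_pos hPtPh]
    exact le_trans (hPtPpsd.eigenvalues_nonneg (Classical.arbitrary _))
      (le_ciSup (Set.Finite.bddAbove (Set.finite_range _)) _)
  constructor
  · rw [htr]
    calc minEigR (Pᵀ * P) * minEigR M * (∑ j, γ j ^ (2 * l))
        = minEigR (Pᵀ * P) * (minEigR M * ∑ j, γ j ^ (2 * l)) := mul_assoc _ _ _
      _ ≤ minEigR (Pᵀ * P) * S.trace := mul_le_mul_of_nonneg_left hlow hcmin_nonneg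
      _ ≤ (S * (Pᵀ * P)).trace := by
            have := hB1.1
            rwa [minEigR, dif_pos hPtPh]
  · rw [htr]
    calc (S * (Pᵀ * P)).trace
        ≤ maxEigR (Pᵀ * P) * S.trace := by
            have := hB1.2
            rwa [maxEigR, dif_pos hPtPh]
      _ ≤ maxEigR (Pᵀ * P) * (maxEigR M * ∑ j, γ j ^ (2 * l)) :=
            mul_le_mul_of_nonneg_left hhigh hcmax_nonneg
      _ = maxEigR (Pᵀ * P) * maxEigR M * (∑ j, γ j ^ (2 * l)) := (mul_assoc _ _ _).symm
end

section
/- Let B = P Θ P^{-1} be an N×N real matrix with P invertible and Θ = diag(γ_1,…,γ_N) a real diagonal matrix with 0 < max_j |γ_j| =: γ < 1, and let C_E be an N×N real symmetric positive definite matrix; for l ∈ ℕ set C(l) = B^l C_E (B^T)^l. Let v_1,…,v_k be positive real numbers and for T > 0 set l_i(T) = ⌈T/v_i⌉. Then lim_{T→∞} −(1/T) · log(Σ_{i=1}^k trace(C(l_i(T)))) = (2 / max_{1 ≤ i ≤ k} v_i) · log(1/γ). In particular, the error exponent of the uncoded distributed linear inverse scheme, whose expected squared error at deadline T equals Σ_{i=1}^k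 trace(C(l_i(T))), is (2 / max_{i ∈ [k]} v_i) · log(1/γ). -/
open Matrix Filter
open scoped BigOperators Topology

lemma psd_diag_nonneg_s16 {n : ℕ} {A : Matrix (Fin n) (Fin n) ℝ} (hA : A.PosSemidef) (i : Fin n) :
    0 ≤ A i i := by
  have h := hA.dotProduct_mulVec_nonneg (Pi.single i 1)
  simpa [mulVec_single, single_dotProduct] using h

lemma psd_abs_entry_le {n : ℕ} {A : Matrix (Fin n) (Fin n) ℝ} (hA : A.PosSemidef) (i j : Fin n) :
    |A i j| ≤ (A i i + A j j) / 2 := by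
  have hsym : A j i = A i j := by
    conv_lhs => rw [← hA.1]
    simp
  have h1 := hA.dotProduct_mulVec_nonneg (Pi.single i 1 + Pi.single j 1)
  have h2 := hA.dotProduct_mulVec_nonneg (Pi.single i 1 - Pi.single j 1)
  simp only [star_trivial, mulVec_add, mulVec_sub, add_dotProduct, sub_dotProduct,
    dotProduct_add, dotProduct_sub, mulVec_single, single_dotProduct, mul_one, one_mul,
    MulOpposite.op_one, one_smul, Matrix.col_apply] at h1 h2
  rw [abs_le]
  constructor <;> linarith

lemma trace_eq_sum {n : ℕ} (A : Matrix (Fin n) (Fin n) ℝ) : A.trace = ∑ i, A i i := rfl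

lemma psd_quad_le_trace {n : ℕ} {A : Matrix (Fin n) (Fin n) ℝ} (hA : A.PosSemidef)
    (x : Fin n → ℝ) : x ⬝ᵥ A *ᵥ x ≤ (∑ i, |x i|)^2 * A.trace := by
  have htr : ∀ i, A i i ≤ A.trace := by
    intro i
    rw [trace_eq_sum]
    exact Finset.single_le_sum (fun j _ => psd_diag_nonneg_s16 hA j) (Finset.mem_univ i)
  have hexp : x ⬝ᵥ A *ᵥ x = ∑ i, ∑ j, x i * (A i j * x j) := by
    simp [dotProduct, mulVec, Finset.mul_sum]
  rw [hexp]
  have hsq : (∑ i, |x i|)^2 * A.trace = ∑ i : Fin n, ∑ j : Fin n, |x i| * |x j| * A.trace := by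
    rw [sq, Finset.sum_mul_sum, Finset.sum_mul]
    congr 1; ext i; rw [Finset.sum_mul]
  rw [hsq]
  apply Finset.sum_le_sum; intro i _; apply Finset.sum_le_sum; intro j _
  calc x i * (A i j * x j) ≤ |x i * (A i j * x j)| := le_abs_self _
    _ = |x i| * |A i j| * |x j| := by rw [abs_mul, abs_mul]; ring
    _ ≤ |x i| * ((A i i + A j j)/2) * |x j| :=
        mul_le_mul_of_nonneg_right (mul_le_mul_of_nonneg_left (psd_abs_entry_le hA i j)
          (abs_nonneg _)) (abs_nonneg _)
    _ ≤ |x i| * A.trace * |x j| := by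
        have h : (A i i + A j j)/2 ≤ A.trace := by linarith [htr i, htr j]
        exact mul_le_mul_of_nonneg_right (mul_le_mul_of_nonneg_left h (abs_nonneg _)) (abs_nonneg _)
    _ = |x i| * |x j| * A.trace := by ring


lemma matC_posSemidef {N : ℕ} {B CE : Matrix (Fin N) (Fin N) ℝ} (hCE : CE.PosSemidef)
    (l : ℕ) : (matC B CE l).PosSemidef := by
  have h := hCE.mul_mul_conjTranspose_same (B ^ l)
  simpa [matC, transpose_pow] using h

lemma trace_lower_bound {N : ℕ} (hN : 0 < N)
    (P : Matrix (Fin N) (Fin N) ℝ) (hP : IsUnit P.det)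
    (γv : Fin N → ℝ) (B : Matrix (Fin N) (Fin N) ℝ)
    (hB : B = P * Matrix.diagonal γv * P⁻¹)
    (γ : ℝ) (hγ_att : ∃ j, |γv j| = γ)
    (CE : Matrix (Fin N) (Fin N) ℝ) (hCE : CE.PosDef) :
    ∃ c > 0, ∀ l : ℕ, c * (γ ^ 2) ^ l ≤ (matC B CE l).trace := by
  obtain ⟨j0, hj0⟩ := hγ_att
  set x : Fin N → ℝ := Pi.single j0 1 ᵥ* P⁻¹ with hxdef
  have hxP : x ᵥ* P = Pi.single j0 1 := by
    rw [hxdef, vecMul_vecMul, nonsing_inv_mul P hP, vecMul_one]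
  have hxne : x ≠ 0 := by
    intro h
    have : (Pi.single j0 1 : Fin N → ℝ) j0 = 0 := by
      rw [← hxP, h]; simp
    simp at this
  have heig : Bᵀ *ᵥ x = γv j0 • x := by
    have h1 : Pi.single j0 1 ᵥ* Matrix.diagonal γv = Pi.single j0 (γv j0) := by
      funext j
      by_cases hj : j = j0 <;> simp [vecMul_diagonal, Pi.single_apply, hj]
    rw [mulVec_transpose, hB, ← vecMul_vecMul, ← vecMul_vecMul, hxP, h1, hxdef]
    funext j
    simp [vecMul, dotProduct, Pi.single_apply, Finset.sum_ite_eq, Finset.sum_ite_eq',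
      Finset.mul_sum, ite_mul, mul_assoc]
  have heigl : ∀ l : ℕ, (Bᵀ) ^ l *ᵥ x = (γv j0) ^ l • x := by
    intro l
    induction l with
    | zero => simp
    | succ n ih =>
      rw [pow_succ, ← mulVec_mulVec, heig, mulVec_smul, ih, pow_succ, smul_smul, mul_comm]
  have hquad : ∀ l : ℕ, x ⬝ᵥ (matC B CE l *ᵥ x) = (γ ^ 2) ^ l * (x ⬝ᵥ CE *ᵥ x) := by
    intro l
    rw [matC, ← mulVec_mulVec, ← mulVec_mulVec, dotProduct_mulVec, ← mulVec_transpose,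
      transpose_pow, heigl, smul_dotProduct, mulVec_smul, dotProduct_smul]
    rw [smul_eq_mul, smul_eq_mul, ← mul_assoc, ← pow_add, ← two_mul, pow_mul, ← hj0, sq_abs]
  have hq : 0 < x ⬝ᵥ CE *ᵥ x := by
    have := hCE.dotProduct_mulVec_pos hxne
    simpa using this
  have hcx : 0 < (∑ i, |x i|) ^ 2 := by
    have : 0 < ∑ i, |x i| := by
      obtain ⟨i, hi⟩ := Function.ne_iff.mp hxne
      exact Finset.sum_pos' (fun j _ => abs_nonneg _)
        ⟨i, Finset.mem_univ i, abs_pos.mpr hi⟩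
    positivity
  refine ⟨(x ⬝ᵥ CE *ᵥ x) / (∑ i, |x i|)^2, by positivity, fun l => ?_⟩
  have h1 := psd_quad_le_trace (matC_posSemidef (B := B) hCE.posSemidef l) x
  rw [hquad l] at h1
  rw [div_mul_eq_mul_div, div_le_iff₀ hcx]
  nlinarith [h1]

lemma trace_upper_bound {N : ℕ}
    (P : Matrix (Fin N) (Fin N) ℝ) (hP : IsUnit P.det)
    (γv : Fin N → ℝ) (B : Matrix (Fin N) (Fin N) ℝ)
    (hB : B = P * Matrix.diagonal γv * P⁻¹)
    (γ : ℝ) (hγ_ub : ∀ j, |γv j| ≤ γ) (hγ_pos : 0 < γ)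
    (CE : Matrix (Fin N) (Fin N) ℝ) :
    ∃ c : ℝ, ∀ l : ℕ, (matC B CE l).trace ≤ c * (γ ^ 2) ^ l := by
  set M := P⁻¹ * CE * P⁻¹ᵀ with hM
  set Q := Pᵀ * P with hQ
  have hBl : ∀ l : ℕ, B ^ l = P * (Matrix.diagonal γv) ^ l * P⁻¹ := by
    intro l; induction l with
    | zero => simp [Matrix.mul_nonsing_inv P hP]
    | succ n ih =>
      rw [pow_succ, ih, hB, pow_succ]
      rw [Matrix.mul_assoc (P * Matrix.diagonal γv ^ n) P⁻¹,
        ← Matrix.mul_assoc P⁻¹, ← Matrix.mul_assoc P⁻¹, Matrix.nonsing_inv_mul P hP,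
        Matrix.one_mul]
      simp [Matrix.mul_assoc]
  have htr : ∀ l : ℕ, (matC B CE l).trace
      = ∑ j, ∑ m, (γv j) ^ l * M j m * (γv m) ^ l * Q m j := by
    intro l
    have h1 : matC B CE l =
        P * (Matrix.diagonal (fun j => (γv j) ^ l) * M * Matrix.diagonal (fun j => (γv j) ^ l)
          * Pᵀ) := by
      have hd : (Matrix.diagonal γv) ^ l = Matrix.diagonal (fun j => (γv j) ^ l) := by
        rw [Matrix.diagonal_pow]; rfl
      rw [matC, ← transpose_pow, hBl, hd, Matrix.transpose_mul, Matrix.transpose_mul,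
        Matrix.diagonal_transpose, hM]
      simp only [Matrix.mul_assoc]
    rw [h1, Matrix.trace_mul_comm]
    have h2 : ∀ (X : Matrix (Fin N) (Fin N) ℝ), (X * Pᵀ * P).trace
        = ∑ j, ∑ m, X j m * Q m j := by
      intro X
      rw [Matrix.mul_assoc, ← hQ]
      simp [Matrix.trace, Matrix.diag, Matrix.mul_apply]
    rw [h2]
    congr 1; funext j; congr 1; funext m
    rw [Matrix.mul_diagonal, Matrix.diagonal_mul]
  set c : ℝ := ∑ j, ∑ m, |M j m| * |Q m j| with hc
  refine ⟨c, fun l => ?_⟩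
  rw [htr]
  have hcs : c * (γ ^ 2) ^ l = ∑ j, ∑ m, |M j m| * |Q m j| * (γ ^ 2) ^ l := by
    rw [hc, Finset.sum_mul]
    congr 1; funext j; rw [Finset.sum_mul]
  rw [hcs]
  apply Finset.sum_le_sum; intro j _; apply Finset.sum_le_sum; intro m _
  have hgl : (0:ℝ) ≤ γ ^ l := pow_nonneg hγ_pos.le l
  have haj : |γv j ^ l| ≤ γ ^ l := by
    rw [abs_pow]; exact pow_le_pow_left₀ (abs_nonneg _) (hγ_ub j) l
  have ham : |γv m ^ l| ≤ γ ^ l := by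
    rw [abs_pow]; exact pow_le_pow_left₀ (abs_nonneg _) (hγ_ub m) l
  calc γv j ^ l * M j m * γv m ^ l * Q m j
      ≤ |γv j ^ l * M j m * γv m ^ l * Q m j| := le_abs_self _
    _ = |γv j ^ l| * |M j m| * |γv m ^ l| * |Q m j| := by
        rw [abs_mul, abs_mul, abs_mul]
    _ ≤ γ ^ l * |M j m| * (γ ^ l) * |Q m j| := by
        gcongr <;> first | exact haj | exact ham | positivity
    _ = |M j m| * |Q m j| * (γ ^ 2) ^ l := by
        rw [← pow_mul, mul_comm 2 l, pow_mul]; ring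

/-- Theorem 7, uncoded part: the error exponent of the uncoded scheme.
Let `B = P Θ P⁻¹` with `Θ = diag(γ₁,…,γ_N)` and `γ = max_j |γ_j| ∈ (0,1)`, `C_E`
symmetric positive definite, `v₁,…,v_k > 0` the per-iteration times and
`l_i(T) = ⌈T / v_i⌉`.  Then
`lim_{T→∞} -(1/T) log (Σᵢ trace C(lᵢ(T))) = (2 / max_i v_i) · log(1/γ)`. -/
theorem uncoded_error_exponent
    {N k : ℕ} (hN : 0 < N) (hk : 0 < k)
    (P : Matrix (Fin N) (Fin N) ℝ) (hP : IsUnit P.det)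
    (γv : Fin N → ℝ)
    (B : Matrix (Fin N) (Fin N) ℝ)
    (hB : B = P * Matrix.diagonal γv * P⁻¹)
    (γ : ℝ) (hγ_ub : ∀ j, |γv j| ≤ γ) (hγ_att : ∃ j, |γv j| = γ)
    (hγ_pos : 0 < γ) (hγ_lt : γ < 1)
    (CE : Matrix (Fin N) (Fin N) ℝ) (hCE : CE.PosDef)
    (v : Fin k → ℝ) (hv : ∀ i, 0 < v i)
    (vmax : ℝ) (hvmax_ub : ∀ i, v i ≤ vmax) (hvmax_att : ∃ i, v i = vmax) :
    Tendsto
      (fun T : ℝ =>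
        -(1 / T) * Real.log (∑ i : Fin k, (matC B CE ⌈T / v i⌉₊).trace))
      atTop (𝓝 ((2 / vmax) * Real.log (1 / γ))) := by
  obtain ⟨c₁, hc₁, hlb⟩ := trace_lower_bound hN P hP γv B hB γ hγ_att CE hCE
  obtain ⟨c₂, hub⟩ := trace_upper_bound P hP γv B hB γ hγ_ub hγ_pos CE
  obtain ⟨i0, hi0⟩ := hvmax_att
  have hvmax_pos : 0 < vmax := hi0 ▸ hv i0
  have hg2_pos : (0:ℝ) < γ ^ 2 := by positivity
  have hg2_lt : γ ^ 2 < 1 := by nlinarith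
  have hc₂pos : 0 < c₂ := by
    have h1 := hlb 0
    have h2 := hub 0
    simp only [pow_zero, mul_one] at h1 h2
    linarith
  set L : ℝ := (2 / vmax) * Real.log (1 / γ) with hLdef
  have hloggam : -(1 / vmax) * Real.log (γ ^ 2) = L := by
    rw [Real.log_pow, hLdef, one_div γ, Real.log_inv]
    push_cast; ring
  have key : ∀ T : ℝ, 0 < T →
      -(1/T) * Real.log ((k:ℝ) * c₂) + L
        ≤ -(1 / T) * Real.log (∑ i : Fin k, (matC B CE ⌈T / v i⌉₊).trace)
      ∧ -(1 / T) * Real.log (∑ i : Fin k, (matC B CE ⌈T / v i⌉₊).trace)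
        ≤ -(1/T) * Real.log (c₁ * γ ^ 2) + L := by
    intro T hT
    set S : ℝ := ∑ i : Fin k, (matC B CE ⌈T / v i⌉₊).trace with hSdef
    have hTvmax_nonneg : 0 ≤ T / vmax := div_nonneg hT.le hvmax_pos.le
    -- lower bound on S
    have hS_lb : c₁ * γ ^ 2 * (γ ^ 2) ^ (T / vmax : ℝ) ≤ S := by
      have t1 : c₁ * (γ ^ 2) ^ (⌈T / vmax⌉₊ : ℕ) ≤ S := by
        refine le_trans (hlb _) ?_
        have hs := Finset.single_le_sum
          (f := fun i : Fin k => (matC B CE ⌈T / v i⌉₊).trace)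
          (fun i _ => le_trans (by positivity) (hlb ⌈T / v i⌉₊)) (Finset.mem_univ i0)
        simpa [hi0] using hs
      refine le_trans ?_ t1
      have t2 : ((γ ^ 2) ^ (((⌈T / vmax⌉₊ : ℕ)) : ℝ) : ℝ) ≥ (γ ^ 2) ^ (T / vmax + 1 : ℝ) :=
        Real.rpow_le_rpow_of_exponent_ge hg2_pos hg2_lt.le
          (le_of_lt (Nat.ceil_lt_add_one hTvmax_nonneg))
      rw [Real.rpow_natCast] at t2
      have t3 : ((γ ^ 2 : ℝ)) ^ (T / vmax + 1 : ℝ) = (γ ^ 2) ^ (T / vmax : ℝ) * (γ ^ 2) := by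
        rw [Real.rpow_add hg2_pos, Real.rpow_one]
      rw [t3] at t2
      calc c₁ * γ ^ 2 * (γ ^ 2) ^ (T / vmax : ℝ)
          = c₁ * ((γ ^ 2) ^ (T / vmax : ℝ) * γ ^ 2) := by ring
        _ ≤ c₁ * (γ ^ 2) ^ (⌈T / vmax⌉₊ : ℕ) := by
            apply mul_le_mul_of_nonneg_left t2 hc₁.le
    have hS_pos : 0 < S := lt_of_lt_of_le (by positivity) hS_lb
    -- upper bound on S
    have hS_ub : S ≤ (k : ℝ) * c₂ * (γ ^ 2) ^ (T / vmax : ℝ) := by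
      have t4 : ∀ i : Fin k, (matC B CE ⌈T / v i⌉₊).trace
          ≤ c₂ * (γ ^ 2) ^ (T / vmax : ℝ) := by
        intro i
        refine le_trans (hub _) ?_
        have h5 : ((γ ^ 2 : ℝ)) ^ ((⌈T / v i⌉₊ : ℕ) : ℝ) ≤ (γ ^ 2) ^ (T / vmax : ℝ) := by
          apply Real.rpow_le_rpow_of_exponent_ge hg2_pos hg2_lt.le
          calc T / vmax ≤ T / v i := by
                apply div_le_div_of_nonneg_left hT.le (hv i) (hvmax_ub i)
            _ ≤ (⌈T / v i⌉₊ : ℝ) := Nat.le_ceil _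
        rw [Real.rpow_natCast] at h5
        exact mul_le_mul_of_nonneg_left h5 hc₂pos.le
      calc S ≤ ∑ _i : Fin k, c₂ * (γ ^ 2) ^ (T / vmax : ℝ) :=
            Finset.sum_le_sum (fun i _ => t4 i)
        _ = (k : ℝ) * c₂ * (γ ^ 2) ^ (T / vmax : ℝ) := by
            rw [Finset.sum_const, Finset.card_univ, Fintype.card_fin, nsmul_eq_mul]; ring
    -- take logs
    have hlog_ub : Real.log S ≤ Real.log ((k:ℝ) * c₂) + (T / vmax) * Real.log (γ ^ 2) := by
      calc Real.log S ≤ Real.log ((k:ℝ) * c₂ * (γ ^ 2) ^ (T / vmax : ℝ)) :=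
            Real.log_le_log hS_pos hS_ub
        _ = Real.log ((k:ℝ) * c₂) + (T / vmax) * Real.log (γ ^ 2) := by
            rw [Real.log_mul (by positivity) (Real.rpow_pos_of_pos hg2_pos _).ne',
              Real.log_rpow hg2_pos]
    have hlog_lb : Real.log (c₁ * γ ^ 2) + (T / vmax) * Real.log (γ ^ 2) ≤ Real.log S := by
      calc Real.log (c₁ * γ ^ 2) + (T / vmax) * Real.log (γ ^ 2)
          = Real.log (c₁ * γ ^ 2 * (γ ^ 2) ^ (T / vmax : ℝ)) := by
            rw [Real.log_mul (by positivity) (Real.rpow_pos_of_pos hg2_pos _).ne',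
              Real.log_rpow hg2_pos]
        _ ≤ Real.log S := Real.log_le_log (by positivity) hS_lb
    have hneg : -(1/T) ≤ 0 := by
      have : 0 < 1/T := by positivity
      linarith
    have eid : ∀ a : ℝ, -(1/T) * (a + (T / vmax) * Real.log (γ ^ 2))
        = -(1/T) * a + L := by
      intro a
      rw [← hloggam]
      field_simp
      ring
    constructor
    · have := mul_le_mul_of_nonpos_left hlog_ub hneg
      rw [mul_add] at this
      calc -(1/T) * Real.log ((k:ℝ) * c₂) + L
          = -(1/T) * (Real.log ((k:ℝ) * c₂) + (T / vmax) * Real.log (γ ^ 2)) := (eid _).symm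
        _ ≤ -(1/T) * Real.log S := mul_le_mul_of_nonpos_left hlog_ub hneg
    · calc -(1/T) * Real.log S
          ≤ -(1/T) * (Real.log (c₁ * γ ^ 2) + (T / vmax) * Real.log (γ ^ 2)) :=
            mul_le_mul_of_nonpos_left hlog_lb hneg
        _ = -(1/T) * Real.log (c₁ * γ ^ 2) + L := eid _
  -- limits of the bounding functions
  have h0 : Tendsto (fun T : ℝ => -(1/T)) atTop (𝓝 0) := by
    simpa [one_div] using (tendsto_inv_atTop_zero (𝕜 := ℝ)).neg
  have lo_lim : Tendsto (fun T : ℝ => -(1/T) * Real.log ((k:ℝ) * c₂) + L) atTop (𝓝 L) := by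
    have := (h0.mul_const (Real.log ((k:ℝ) * c₂))).add_const L
    simpa using this
  have hi_lim : Tendsto (fun T : ℝ => -(1/T) * Real.log (c₁ * γ ^ 2) + L) atTop (𝓝 L) := by
    have := (h0.mul_const (Real.log (c₁ * γ ^ 2))).add_const L
    simpa using this
  refine tendsto_of_tendsto_of_tendsto_of_le_of_le' lo_lim hi_lim ?_ ?_
  · filter_upwards [eventually_gt_atTop (0:ℝ)] with T hT
    exact (key T hT).1
  · filter_upwards [eventually_gt_atTop (0:ℝ)] with T hT
    exact (key T hT).2
end

section
/- Let B = P Θ P^{-1} be an N×N real matrix with P invertible and Θ = diag(γ_1,…,γ_N) a real diagonal matrix with 0 < max_j |γ_j| =: γ < 1, and let C_E be an N×N real symmetric positive definite matrix; for l ∈ ℕ set C(l) = B^l C_E (B^T)^l. Let G be a k×n complex matrix (k < n) with orthonormal rows (G G^H = I_k) such that s_min := min over all subsets S ⊆ {1,…,n} of size k of the smallest eigenvalue of G_S G_S^H is strictly positive, where G_S is the k×k submatrix of the columns of G indexed by S. Let v_1,…,v_n be positive real numbers with order statistics v_{(1)} ≤ v_{(2)} ≤ … ≤ v_{(n)}, and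 for T > 0 set l_i(T) = ⌈T/v_i⌉ and Λ(T) = diag(trace(C(l_1(T))),…,trace(C(l_n(T)))). Then liminf_{T→∞} −(1/T) · log trace((G Λ(T)^{-1} G^H)^{-1}) ≥ (2 / v_{(k)}) · log(1/γ). Consequently, the error exponent of the coded linear inverse scheme, whose expected squared error is at most trace((G Λ(T)^{-1} G^H)^{-1}), is at least (2 / v_{(k)}) · log(1/γ), which is determined by the k-th fastest of the n workers. -/
open Matrix Filter
open scoped BigOperators Topology

/-- smallest eigenvalue of a complex Hermitian matrix. -/
noncomputable def minEigC {m : ℕ} (A : Matrix (Fin m) (Fin m) ℂ) : ℝ :=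
  if h : A.IsHermitian then ⨅ i, h.eigenvalues i else 0

/-- `s_min`: the minimum over all column subsets `S` of size `k` of the smallest
eigenvalue of `G_S G_Sᴴ` (here realized as `(G_S G_Sᴴ)_{i,i'} = Σ_{j ∈ S} G i j conj(G i' j)`,
which is independent of the ordering of the columns in `S`). -/
noncomputable def sMin {k n : ℕ} (hkn : k ≤ n) (G : Matrix (Fin k) (Fin n) ℂ) : ℝ :=
  (Finset.univ.filter fun S : Finset (Fin n) => S.card = k).inf'
    (by
      obtain ⟨t, _, ht⟩ :=
        Finset.exists_subset_card_eq (s := (Finset.univ : Finset (Fin n))) (n := k)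
          (by simpa using hkn)
      exact ⟨t, by simp [ht]⟩)
    fun S => minEigC (Matrix.of fun i i' => ∑ j ∈ S, G i j * star (G i' j))


set_option maxHeartbeats 1600000
section Aux
variable {𝕜 : Type*} [RCLike 𝕜]

lemma star_dot_self {m : ℕ} (z : Fin m → 𝕜) :
    star z ⬝ᵥ z = ((∑ j, ‖z j‖ ^ 2 : ℝ) : 𝕜) := by
  rw [RCLike.ofReal_sum]
  simp only [dotProduct, Pi.star_apply]
  exact Finset.sum_congr rfl fun j _ => by
    rw [RCLike.star_def, RCLike.conj_mul, RCLike.ofReal_pow]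

lemma quad_eqK {m : ℕ} (U : Matrix (Fin m) (Fin m) 𝕜) (r : Fin m → ℝ) (x : Fin m → 𝕜) :
    RCLike.re (star x ⬝ᵥ (U * Matrix.diagonal (fun i => (r i : 𝕜)) * star U) *ᵥ x) =
      ∑ j, r j * ‖(star U *ᵥ x) j‖ ^ 2 := by
  set y := star U *ᵥ x with hy
  have h1 : (U * Matrix.diagonal (fun i => (r i : 𝕜)) * star U) *ᵥ x
      = U *ᵥ (Matrix.diagonal (fun i => (r i : 𝕜)) *ᵥ y) := by
    rw [← mulVec_mulVec, ← mulVec_mulVec]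
  rw [h1, dotProduct_mulVec]
  have h2 : star x ᵥ* U = star y := by
    rw [hy, star_mulVec, Matrix.star_eq_conjTranspose, conjTranspose_conjTranspose]
  rw [h2]
  have h3 : star y ⬝ᵥ (Matrix.diagonal (fun i => (r i : 𝕜)) *ᵥ y)
      = ∑ j, (r j : 𝕜) * (star (y j) * y j) := by
    simp only [dotProduct, mulVec_diagonal]
    exact Finset.sum_congr rfl fun j _ => by simp only [Pi.star_apply]; ring
  rw [h3, map_sum]
  refine Finset.sum_congr rfl fun j _ => ?_
  rw [RCLike.star_def, RCLike.conj_mul, ← RCLike.ofReal_pow, ← RCLike.ofReal_mul,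
    RCLike.ofReal_re]

lemma normSq_mulVec_eq {m p : ℕ} (U : Matrix (Fin m) (Fin p) 𝕜)
    (hU : U * Uᴴ = 1) (x : Fin m → 𝕜) :
    ∑ j, ‖(Uᴴ *ᵥ x) j‖ ^ 2 = ∑ j, ‖x j‖ ^ 2 := by
  have h1 : star (Uᴴ *ᵥ x) = star x ᵥ* U := by
    rw [star_mulVec, conjTranspose_conjTranspose]
  have h2 : star (Uᴴ *ᵥ x) ⬝ᵥ (Uᴴ *ᵥ x) = star x ⬝ᵥ x := by
    rw [h1, ← dotProduct_mulVec, mulVec_mulVec, hU, one_mulVec]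
  rw [star_dot_self, star_dot_self] at h2
  exact_mod_cast h2

lemma normSq_star_sq {m : ℕ} (U : Matrix (Fin m) (Fin m) 𝕜)
    (hU : U * star U = 1) (x : Fin m → 𝕜) :
    ∑ j, ‖(star U *ᵥ x) j‖ ^ 2 = ∑ j, ‖x j‖ ^ 2 := by
  rw [Matrix.star_eq_conjTranspose] at hU ⊢
  exact normSq_mulVec_eq U hU x

/-- Quadratic form lower bound by smallest eigenvalue. -/
lemma inf_eig_le_quad {m : ℕ} [NeZero m] {A : Matrix (Fin m) (Fin m) 𝕜} (hA : A.IsHermitian)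
    (x : Fin m → 𝕜) :
    (⨅ i, hA.eigenvalues i) * ∑ j, ‖x j‖ ^ 2 ≤ RCLike.re (star x ⬝ᵥ A *ᵥ x) := by
  set U : Matrix (Fin m) (Fin m) 𝕜 := (hA.eigenvectorUnitary : Matrix (Fin m) (Fin m) 𝕜)
  have hU : U ∈ Matrix.unitaryGroup (Fin m) 𝕜 := (hA.eigenvectorUnitary).2
  have hUU : U * star U = 1 := (Matrix.mem_unitaryGroup_iff).mp hU
  have hsp : A = U * Matrix.diagonal (fun i => (hA.eigenvalues i : 𝕜)) * star U := by
    exact hA.spectral_theorem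
  have hq := quad_eqK U hA.eigenvalues x
  rw [← hsp] at hq
  rw [hq, ← normSq_star_sq U hUU x, Finset.mul_sum]
  apply Finset.sum_le_sum
  intro j _
  exact mul_le_mul_of_nonneg_right (ciInf_le (Set.Finite.bddBelow (Set.finite_range _)) j)
    (by positivity)

/-- Two-sided trace bounds on the inverse. -/
lemma trace_inv_re_bounds {m : ℕ} [NeZero m] {A : Matrix (Fin m) (Fin m) 𝕜} (hA : A.IsHermitian)
    {c d : ℝ} (hc : 0 < c)
    (hlow : ∀ x : Fin m → 𝕜, c * ∑ j, ‖x j‖ ^ 2 ≤ RCLike.re (star x ⬝ᵥ A *ᵥ x))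
    (hup : ∀ x : Fin m → 𝕜, RCLike.re (star x ⬝ᵥ A *ᵥ x) ≤ d * ∑ j, ‖x j‖ ^ 2) :
    m / d ≤ RCLike.re (A⁻¹).trace ∧ RCLike.re (A⁻¹).trace ≤ m / c := by
  set U : Matrix (Fin m) (Fin m) 𝕜 := (hA.eigenvectorUnitary : Matrix (Fin m) (Fin m) 𝕜)
  have hU : U ∈ Matrix.unitaryGroup (Fin m) 𝕜 := (hA.eigenvectorUnitary).2
  have hUU : U * star U = 1 := (Matrix.mem_unitaryGroup_iff).mp hU
  have hUU' : star U * U = 1 := (Matrix.mem_unitaryGroup_iff').mp hU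
  have hsp : A = U * Matrix.diagonal (fun i => (hA.eigenvalues i : 𝕜)) * star U := by
    exact hA.spectral_theorem
  have heig : ∀ i, c ≤ hA.eigenvalues i ∧ hA.eigenvalues i ≤ d := by
    intro i
    set w : Fin m → 𝕜 := (WithLp.equiv 2 _) (hA.eigenvectorBasis i) with hw
    have hnorm : ∑ j, ‖w j‖ ^ 2 = 1 := by
      have h1 : ‖hA.eigenvectorBasis i‖ = 1 := hA.eigenvectorBasis.orthonormal.1 i
      have h2 : ‖hA.eigenvectorBasis i‖ ^ 2 = ∑ j, ‖hA.eigenvectorBasis i j‖ ^ 2 := by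
        rw [EuclideanSpace.norm_eq, Real.sq_sqrt (by positivity)]
      rw [h1, one_pow] at h2
      exact h2.symm
    have hAv : A *ᵥ w = hA.eigenvalues i • w := hA.mulVec_eigenvectorBasis i
    have hq : RCLike.re (star w ⬝ᵥ A *ᵥ w) = hA.eigenvalues i := by
      rw [hAv]
      have h5 : star w ⬝ᵥ (hA.eigenvalues i • w) = (hA.eigenvalues i : 𝕜) * (star w ⬝ᵥ w) := by
        rw [dotProduct_smul, RCLike.real_smul_eq_coe_mul]
      rw [h5, star_dot_self, hnorm]
      simp
    constructor
    · have := hlow w; rw [hq, hnorm, mul_one] at this; exact this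
    · have := hup w; rw [hq, hnorm, mul_one] at this; exact this
  have heigpos : ∀ i, (0:ℝ) < hA.eigenvalues i := fun i => lt_of_lt_of_le hc (heig i).1
  have hd : 0 < d := lt_of_lt_of_le (heigpos ⟨0, Nat.pos_of_ne_zero (NeZero.ne m)⟩)
    (heig _).2
  have hAinv : A⁻¹ = U * Matrix.diagonal (fun i => ((hA.eigenvalues i : ℝ)⁻¹ : 𝕜)) * star U := by
    apply Matrix.inv_eq_right_inv
    nth_rewrite 1 [hsp]
    simp only [Matrix.mul_assoc]
    rw [← Matrix.mul_assoc (star U) U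
        (Matrix.diagonal (fun i => ((hA.eigenvalues i : ℝ)⁻¹ : 𝕜)) * star U), hUU',
      Matrix.one_mul,
      ← Matrix.mul_assoc (Matrix.diagonal (fun i => (hA.eigenvalues i : 𝕜)))
        (Matrix.diagonal (fun i => ((hA.eigenvalues i : ℝ)⁻¹ : 𝕜))) (star U),
      Matrix.diagonal_mul_diagonal]
    have h6 : (fun i => (hA.eigenvalues i : 𝕜) * ((hA.eigenvalues i : ℝ)⁻¹ : 𝕜))
        = fun _ => (1:𝕜) := by
      funext i
      rw [← RCLike.ofReal_inv, ← RCLike.ofReal_mul, mul_inv_cancel₀ (ne_of_gt (heigpos i))]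
      simp
    rw [h6, Matrix.diagonal_one, Matrix.one_mul, hUU]
  have htr : RCLike.re (A⁻¹).trace = ∑ i, (hA.eigenvalues i)⁻¹ := by
    rw [hAinv, Matrix.trace_mul_cycle, hUU', Matrix.one_mul, Matrix.trace_diagonal, map_sum]
    exact Finset.sum_congr rfl fun i _ => by rw [← RCLike.ofReal_inv, RCLike.ofReal_re]
  rw [htr]
  constructor
  · calc (m : ℝ) / d = ∑ _i : Fin m, d⁻¹ := by
          rw [Finset.sum_const, Finset.card_univ, Fintype.card_fin, nsmul_eq_mul,
            div_eq_mul_inv]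
      _ ≤ ∑ i, (hA.eigenvalues i)⁻¹ :=
          Finset.sum_le_sum fun i _ => inv_anti₀ (heigpos i) (heig i).2
  · calc ∑ i, (hA.eigenvalues i)⁻¹ ≤ ∑ _i : Fin m, c⁻¹ :=
          Finset.sum_le_sum fun i _ => inv_anti₀ hc (heig i).1
      _ = m / c := by
          rw [Finset.sum_const, Finset.card_univ, Fintype.card_fin, nsmul_eq_mul,
            div_eq_mul_inv]

lemma pow_conj {N : ℕ} (P : Matrix (Fin N) (Fin N) ℝ) (γv : Fin N → ℝ) (hP : IsUnit P.det)
    (l : ℕ) : (P * Matrix.diagonal γv * P⁻¹) ^ l = P * Matrix.diagonal (γv ^ l) * P⁻¹ := by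
  induction l with
  | zero =>
      rw [pow_zero, pow_zero, show Matrix.diagonal (1 : Fin N → ℝ) = 1 from Matrix.diagonal_one,
        Matrix.mul_one, Matrix.mul_nonsing_inv P hP]
  | succ l ih =>
      rw [pow_succ, ih, pow_succ]
      rw [Matrix.mul_assoc (P * Matrix.diagonal (γv ^ l)) P⁻¹ _]
      rw [← Matrix.mul_assoc P⁻¹ (P * Matrix.diagonal γv) P⁻¹,
        ← Matrix.mul_assoc P⁻¹ P (Matrix.diagonal γv), Matrix.nonsing_inv_mul P hP,
        Matrix.one_mul]
      rw [← Matrix.mul_assoc (P * Matrix.diagonal (γv ^ l)) (Matrix.diagonal γv) P⁻¹,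
        Matrix.mul_assoc P (Matrix.diagonal (γv ^ l)) (Matrix.diagonal γv),
        Matrix.diagonal_mul_diagonal]
      rfl

lemma trace_matC_eq {N : ℕ} (CE B : Matrix (Fin N) (Fin N) ℝ) (l : ℕ) :
    (matC B CE l).trace = ∑ i, (fun a => (B ^ l) i a) ⬝ᵥ CE *ᵥ (fun a => (B ^ l) i a) := by
  unfold matC
  rw [← Matrix.transpose_pow]
  simp only [Matrix.trace, Matrix.diag, Matrix.mul_apply, Matrix.transpose_apply, dotProduct,
    Matrix.mulVec, dotProduct, Finset.sum_mul, Finset.mul_sum]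
  congr 1; funext i
  rw [Finset.sum_comm]
  congr 1; funext a
  congr 1; funext b
  ring

lemma exists_CE_lower {N : ℕ} [NeZero N] (CE : Matrix (Fin N) (Fin N) ℝ) (hCE : CE.PosDef) :
    ∃ c : ℝ, 0 < c ∧ ∀ x : Fin N → ℝ, c * ∑ j, (x j) ^ 2 ≤ x ⬝ᵥ CE *ᵥ x := by
  refine ⟨⨅ i, hCE.1.eigenvalues i, ?_, ?_⟩
  · obtain ⟨i0, h0⟩ := exists_eq_ciInf_of_finite (f := hCE.1.eigenvalues)
    rw [← h0]
    exact hCE.eigenvalues_pos i0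
  · intro x
    have := inf_eig_le_quad (𝕜 := ℝ) hCE.1 x
    simpa [Real.norm_eq_abs, sq_abs] using this

lemma exists_trace_bounds {N : ℕ} [NeZero N] (P : Matrix (Fin N) (Fin N) ℝ) (hP : IsUnit P.det)
    (γv : Fin N → ℝ) (B : Matrix (Fin N) (Fin N) ℝ) (hB : B = P * Matrix.diagonal γv * P⁻¹)
    (γ : ℝ) (hγ_ub : ∀ j, |γv j| ≤ γ) (hγ_att : ∃ j, |γv j| = γ) (hγ_pos : 0 < γ)
    (CE : Matrix (Fin N) (Fin N) ℝ) (hCE : CE.PosDef) :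
    ∃ M m0 : ℝ, 0 < M ∧ 0 < m0 ∧ ∀ l : ℕ,
      m0 * γ ^ (2 * l) ≤ (matC B CE l).trace ∧ (matC B CE l).trace ≤ M * γ ^ (2 * l) := by
  classical
  have hBl : ∀ l, B ^ l = P * Matrix.diagonal (γv ^ l) * P⁻¹ := fun l => by
    rw [hB]; exact pow_conj P γv hP l
  set Q : Fin N → Fin N → ℝ := fun i j => ∑ a, |P i a| * |P⁻¹ a j| with hQ
  have hQnn : ∀ i j, 0 ≤ Q i j := fun i j =>
    Finset.sum_nonneg fun a _ => mul_nonneg (abs_nonneg _) (abs_nonneg _)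
  have hent : ∀ l i j, |(B ^ l) i j| ≤ γ ^ l * Q i j := by
    intro l i j
    rw [hBl]
    have h1 : ∀ x, (P * Matrix.diagonal (γv ^ l)) i x = P i x * γv x ^ l := fun x => by
      rw [Matrix.mul_diagonal]; simp
    have hexp : (P * Matrix.diagonal (γv ^ l) * P⁻¹) i j
        = ∑ a, P i a * (γv a ^ l) * P⁻¹ a j := by
      rw [Matrix.mul_apply]
      exact Finset.sum_congr rfl fun a _ => by rw [h1]
    rw [hexp]
    calc |∑ a, P i a * (γv a ^ l) * P⁻¹ a j| ≤ ∑ a, |P i a * (γv a ^ l) * P⁻¹ a j| :=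
          Finset.abs_sum_le_sum_abs _ _
      _ ≤ ∑ a, |P i a| * γ ^ l * |P⁻¹ a j| := by
          apply Finset.sum_le_sum
          intro a _
          rw [abs_mul, abs_mul, abs_pow]
          apply mul_le_mul_of_nonneg_right _ (abs_nonneg _)
          exact mul_le_mul_of_nonneg_left
            (pow_le_pow_left₀ (abs_nonneg _) (hγ_ub a) l) (abs_nonneg _)
      _ = γ ^ l * Q i j := by
          rw [hQ, Finset.mul_sum]
          congr 1; funext a; ring
  obtain ⟨c, hcpos, hcq⟩ := exists_CE_lower CE hCE
  obtain ⟨j0, hj0⟩ := hγ_att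
  set C0 : ℝ := ∑ a, ∑ b, |P⁻¹ j0 a| * |P b j0| with hC0
  set M0 : ℝ := ∑ i, ∑ a, ∑ b, Q i a * (|CE a b| * Q i b) with hM0
  have hM0nn : 0 ≤ M0 := Finset.sum_nonneg fun i _ => Finset.sum_nonneg fun a _ =>
    Finset.sum_nonneg fun b _ => mul_nonneg (hQnn _ _)
      (mul_nonneg (abs_nonneg _) (hQnn _ _))
  have hC0nn : 0 ≤ C0 := Finset.sum_nonneg fun a _ => Finset.sum_nonneg fun b _ =>
    mul_nonneg (abs_nonneg _) (abs_nonneg _)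
  have hkey : ∀ l : ℕ, ∃ a b, γ ^ l ≤ C0 * |(B ^ l) a b| := by
    intro l
    obtain ⟨p0, -, hmax⟩ := Finset.exists_max_image (Finset.univ : Finset (Fin N × Fin N))
      (fun p => |(B ^ l) p.1 p.2|) ⟨(j0, j0), Finset.mem_univ _⟩
    refine ⟨p0.1, p0.2, ?_⟩
    set μ := |(B ^ l) p0.1 p0.2| with hμ
    have hμnn : 0 ≤ μ := abs_nonneg _
    have hDl : Matrix.diagonal (γv ^ l) = P⁻¹ * B ^ l * P := by
      rw [hBl, Matrix.mul_assoc, Matrix.mul_assoc, Matrix.nonsing_inv_mul P hP,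
        Matrix.mul_one, ← Matrix.mul_assoc, Matrix.nonsing_inv_mul P hP, Matrix.one_mul]
    have hγl : γ ^ l = |(P⁻¹ * B ^ l * P) j0 j0| := by
      rw [← hDl]
      simp [Matrix.diagonal_apply_eq, ← hj0, ← abs_pow]
    rw [hγl]
    have hexp : (P⁻¹ * B ^ l * P) j0 j0 = ∑ b, (∑ a, P⁻¹ j0 a * (B ^ l) a b) * P b j0 := by
      rw [Matrix.mul_apply]
      exact Finset.sum_congr rfl fun b _ => by rw [Matrix.mul_apply]
    rw [hexp]
    calc |∑ b, (∑ a, P⁻¹ j0 a * (B ^ l) a b) * P b j0|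
        ≤ ∑ b, |(∑ a, P⁻¹ j0 a * (B ^ l) a b) * P b j0| := Finset.abs_sum_le_sum_abs _ _
      _ ≤ ∑ b, (∑ a, |P⁻¹ j0 a| * |(B ^ l) a b|) * |P b j0| := by
          apply Finset.sum_le_sum
          intro b _
          rw [abs_mul]
          apply mul_le_mul_of_nonneg_right _ (abs_nonneg _)
          refine (Finset.abs_sum_le_sum_abs _ _).trans ?_
          exact Finset.sum_le_sum fun a _ => by rw [abs_mul]
      _ ≤ ∑ b, (∑ a, |P⁻¹ j0 a| * μ) * |P b j0| := by
          apply Finset.sum_le_sum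
          intro b _
          apply mul_le_mul_of_nonneg_right _ (abs_nonneg _)
          exact Finset.sum_le_sum fun a _ =>
            mul_le_mul_of_nonneg_left (hmax (a, b) (Finset.mem_univ _)) (abs_nonneg _)
      _ = ∑ b, ∑ a, |P⁻¹ j0 a| * |P b j0| * μ := by
          refine Finset.sum_congr rfl fun b _ => ?_
          rw [Finset.sum_mul]
          exact Finset.sum_congr rfl fun a _ => by ring
      _ = C0 * μ := by
          rw [hC0, Finset.sum_mul, Finset.sum_comm]
          refine Finset.sum_congr rfl fun b _ => ?_
          rw [Finset.sum_mul]
  have hC0pos : 0 < C0 := by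
    obtain ⟨a, b, hab⟩ := hkey 0
    have h1 : |((B ^ 0 : Matrix (Fin N) (Fin N) ℝ)) a b| ≤ 1 := by
      rw [pow_zero]
      by_cases hab' : a = b <;> simp [Matrix.one_apply, hab']
    nlinarith [hab, mul_le_mul_of_nonneg_left h1 hC0nn]
  refine ⟨M0 + 1, c / C0 ^ 2, by linarith, by positivity, fun l => ⟨?_, ?_⟩⟩
  · -- lower bound
    obtain ⟨a0, b0, hab⟩ := hkey l
    set t := |(B ^ l) a0 b0| with ht
    have htnn : 0 ≤ t := abs_nonneg _
    have hrow : c * ((B ^ l) a0 b0) ^ 2 ≤ (fun a => (B ^ l) a0 a) ⬝ᵥ CE *ᵥ (fun a => (B ^ l) a0 a) := by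
      refine le_trans ?_ (hcq fun a => (B ^ l) a0 a)
      apply mul_le_mul_of_nonneg_left _ (le_of_lt hcpos)
      exact Finset.single_le_sum (f := fun b => ((B ^ l) a0 b) ^ 2)
        (fun b _ => sq_nonneg _) (Finset.mem_univ b0)
    have htrace : (fun a => (B ^ l) a0 a) ⬝ᵥ CE *ᵥ (fun a => (B ^ l) a0 a)
        ≤ (matC B CE l).trace := by
      rw [trace_matC_eq]
      refine Finset.single_le_sum
        (f := fun i => (fun a => (B ^ l) i a) ⬝ᵥ CE *ᵥ (fun a => (B ^ l) i a))
        (fun i _ => ?_) (Finset.mem_univ a0)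
      have := hCE.posSemidef.dotProduct_mulVec_nonneg (fun a => (B ^ l) i a)
      simpa using this
    have hsq : c / C0 ^ 2 * γ ^ (2 * l) ≤ c * ((B ^ l) a0 b0) ^ 2 := by
      have h2 : γ ^ l * γ ^ l ≤ (C0 * t) * (C0 * t) :=
        mul_le_mul hab hab (le_of_lt (pow_pos hγ_pos l)) (by positivity)
      have h3 : γ ^ (2 * l) = γ ^ l * γ ^ l := by rw [two_mul, pow_add]
      have h4 : ((B ^ l) a0 b0) ^ 2 = t ^ 2 := (sq_abs _).symm
      rw [h3, h4]
      rw [div_mul_eq_mul_div, div_le_iff₀ (by positivity)]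
      nlinarith [h2]
    calc c / C0 ^ 2 * γ ^ (2 * l) ≤ c * ((B ^ l) a0 b0) ^ 2 := hsq
      _ ≤ _ := le_trans hrow htrace
  · -- upper bound
    have htr3 : (matC B CE l).trace = ∑ i, ∑ a, ∑ b, (B ^ l) i a * (CE a b * (B ^ l) i b) := by
      rw [trace_matC_eq]
      congr 1; funext i
      simp [dotProduct, Matrix.mulVec, Finset.mul_sum]
    rw [htr3]
    have key : ∀ i a b, (B ^ l) i a * (CE a b * (B ^ l) i b)
        ≤ γ ^ (2 * l) * (Q i a * (|CE a b| * Q i b)) := by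
      intro i a b
      calc (B ^ l) i a * (CE a b * (B ^ l) i b) ≤ |(B ^ l) i a * (CE a b * (B ^ l) i b)| :=
            le_abs_self _
        _ = |(B ^ l) i a| * (|CE a b| * |(B ^ l) i b|) := by rw [abs_mul, abs_mul]
        _ ≤ (γ ^ l * Q i a) * (|CE a b| * (γ ^ l * Q i b)) := by
            refine mul_le_mul (hent l i a)
              (mul_le_mul_of_nonneg_left (hent l i b) (abs_nonneg (CE a b)))
              (mul_nonneg (abs_nonneg _) (abs_nonneg _))
              (mul_nonneg (le_of_lt (pow_pos hγ_pos l)) (hQnn i a))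
        _ = γ ^ (2 * l) * (Q i a * (|CE a b| * Q i b)) := by rw [two_mul, pow_add]; ring
    calc ∑ i, ∑ a, ∑ b, (B ^ l) i a * (CE a b * (B ^ l) i b)
        ≤ ∑ i, ∑ a, ∑ b, γ ^ (2 * l) * (Q i a * (|CE a b| * Q i b)) :=
          Finset.sum_le_sum fun i _ => Finset.sum_le_sum fun a _ => Finset.sum_le_sum
            fun b _ => key i a b
      _ = γ ^ (2 * l) * M0 := by
          rw [hM0, Finset.mul_sum]
          refine Finset.sum_congr rfl fun i _ => ?_
          rw [Finset.mul_sum]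
          exact Finset.sum_congr rfl fun a _ => by rw [Finset.mul_sum]
      _ ≤ (M0 + 1) * γ ^ (2 * l) := by
          rw [mul_comm]
          nlinarith [pow_pos hγ_pos (2*l)]

lemma quad_eqRect {k n : ℕ} (G : Matrix (Fin k) (Fin n) 𝕜) (r : Fin n → ℝ) (x : Fin k → 𝕜) :
    RCLike.re (star x ⬝ᵥ (G * Matrix.diagonal (fun j => (r j : 𝕜)) * Gᴴ) *ᵥ x) =
      ∑ j, r j * ‖(Gᴴ *ᵥ x) j‖ ^ 2 := by
  set y := Gᴴ *ᵥ x with hy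
  have h1 : (G * Matrix.diagonal (fun j => (r j : 𝕜)) * Gᴴ) *ᵥ x
      = G *ᵥ (Matrix.diagonal (fun j => (r j : 𝕜)) *ᵥ y) := by
    rw [← mulVec_mulVec, ← mulVec_mulVec]
  rw [h1, dotProduct_mulVec]
  have h2 : star x ᵥ* G = star y := by
    rw [hy, star_mulVec, conjTranspose_conjTranspose]
  rw [h2]
  have h3 : star y ⬝ᵥ (Matrix.diagonal (fun j => (r j : 𝕜)) *ᵥ y)
      = ∑ j, (r j : 𝕜) * (star (y j) * y j) := by
    simp only [dotProduct, mulVec_diagonal]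
    exact Finset.sum_congr rfl fun j _ => by simp only [Pi.star_apply]; ring
  rw [h3, map_sum]
  refine Finset.sum_congr rfl fun j _ => ?_
  rw [RCLike.star_def, RCLike.conj_mul, ← RCLike.ofReal_pow, ← RCLike.ofReal_mul,
    RCLike.ofReal_re]

lemma hermitian_GDGH {k n : ℕ} (G : Matrix (Fin k) (Fin n) 𝕜) (r : Fin n → ℝ) :
    (G * Matrix.diagonal (fun j => (r j : 𝕜)) * Gᴴ).IsHermitian := by
  have hD : (Matrix.diagonal (fun j => (r j : 𝕜)))ᴴ = Matrix.diagonal (fun j => (r j : 𝕜)) := by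
    rw [Matrix.diagonal_conjTranspose]
    have : (star fun j => (r j : 𝕜)) = fun j => (r j : 𝕜) := by
      funext j
      simp only [Pi.star_apply, RCLike.star_def, RCLike.conj_ofReal]
    rw [this]
  show _ = _
  rw [conjTranspose_mul, conjTranspose_mul, conjTranspose_conjTranspose, hD,
    ← Matrix.mul_assoc]

end Aux

/-- Theorem 7, coded part: the error exponent of the coded scheme.
With `B = P Θ P⁻¹`, `γ = max_j |γ_j| ∈ (0,1)`, `C_E` positive definite, a `k × n`
generator matrix `G` with orthonormal rows whose `s_min` is positive, positive
per-iteration times `v₁,…,v_n` with `k`-th order statistic `v_{(k)}`, and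
`Λ(T) = diag(trace C(⌈T/v₁⌉),…,trace C(⌈T/v_n⌉))`:
`liminf_{T→∞} -(1/T) log trace((G Λ(T)⁻¹ Gᴴ)⁻¹) ≥ (2 / v_{(k)}) log(1/γ)`. -/
theorem coded_error_exponent_lower_bound
    {N k n : ℕ} (hN : 0 < N) (hk : 0 < k) (hkn : k < n)
    (P : Matrix (Fin N) (Fin N) ℝ) (hP : IsUnit P.det)
    (γv : Fin N → ℝ)
    (B : Matrix (Fin N) (Fin N) ℝ)
    (hB : B = P * Matrix.diagonal γv * P⁻¹)
    (γ : ℝ) (hγ_ub : ∀ j, |γv j| ≤ γ) (hγ_att : ∃ j, |γv j| = γ)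
    (hγ_pos : 0 < γ) (hγ_lt : γ < 1)
    (CE : Matrix (Fin N) (Fin N) ℝ) (hCE : CE.PosDef)
    (G : Matrix (Fin k) (Fin n) ℂ) (hGG : G * Gᴴ = 1)
    (hsmin : 0 < sMin hkn.le G)
    (v : Fin n → ℝ) (hv : ∀ i, 0 < v i) :
    (2 / v (Tuple.sort v ⟨k - 1, by omega⟩)) * Real.log (1 / γ) ≤
      Filter.liminf
        (fun T : ℝ =>
          -(1 / T) * Real.log
            (((G * (Matrix.diagonal fun i =>
                ((matC B CE ⌈T / v i⌉₊).trace : ℂ))⁻¹ * Gᴴ)⁻¹).trace.re))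
        atTop := by
  classical
  haveI hNZN : NeZero N := ⟨hN.ne'⟩
  haveI hNZk : NeZero k := ⟨hk.ne'⟩
  have hn : 0 < n := lt_trans hk hkn
  obtain ⟨M, m0, hM, hm0, hbounds⟩ :=
    exists_trace_bounds P hP γv B hB γ hγ_ub hγ_att hγ_pos CE hCE
  have hkR : (0:ℝ) < (k:ℝ) := Nat.cast_pos.mpr hk
  set vk : ℝ := v (Tuple.sort v ⟨k - 1, by omega⟩) with hvkdef
  have hvk : 0 < vk := hv _
  set vmin : ℝ := v (Tuple.sort v ⟨0, by omega⟩) with hvmindef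
  have hvminpos : 0 < vmin := hv _
  have hvmin : ∀ j, vmin ≤ v j := by
    intro j
    have h1 : (⟨0, by omega⟩ : Fin n) ≤ (Tuple.sort v).symm j := by
      simp [Fin.le_def]
    have h2 := Tuple.monotone_sort v h1
    simpa using h2
  set S : Finset (Fin n) :=
    Finset.image (fun i : Fin k => Tuple.sort v (Fin.castLE hkn.le i)) Finset.univ with hSdef
  have hScard : S.card = k := by
    have hinj : Function.Injective (fun i : Fin k => Tuple.sort v (Fin.castLE hkn.le i)) :=
      fun a b hab => Fin.castLE_injective hkn.le ((Tuple.sort v).injective hab)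
    rw [hSdef, Finset.card_image_of_injective _ hinj, Finset.card_univ, Fintype.card_fin]
  have hSv : ∀ j ∈ S, v j ≤ vk := by
    intro j hj
    rw [hSdef, Finset.mem_image] at hj
    obtain ⟨i, -, rfl⟩ := hj
    refine Tuple.monotone_sort v ?_
    have hik := i.isLt
    simp only [Fin.le_def, Fin.coe_castLE]
    omega
  set MS : Matrix (Fin k) (Fin k) ℂ :=
    Matrix.of (fun i i' => ∑ j ∈ S, G i j * star (G i' j)) with hMSdef
  have hMSH : MS.IsHermitian := by
    show MSᴴ = MS
    ext i i'
    simp only [hMSdef, conjTranspose_apply, Matrix.of_apply, star_sum, star_mul', star_star]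
    exact Finset.sum_congr rfl fun j _ => mul_comm _ _
  have hMSquad : ∀ x : Fin k → ℂ,
      RCLike.re (star x ⬝ᵥ MS *ᵥ x) = ∑ j ∈ S, ‖(Gᴴ *ᵥ x) j‖ ^ 2 := by
    intro x
    have h1 : star x ⬝ᵥ MS *ᵥ x
        = ∑ j ∈ S, (∑ i, star (x i) * G i j) * (∑ i', star (G i' j) * x i') := by
      calc star x ⬝ᵥ MS *ᵥ x
          = ∑ i, ∑ i', ∑ j ∈ S, star (x i) * (G i j * star (G i' j)) * x i' := by
            simp only [dotProduct, Matrix.mulVec, Matrix.of_apply, Pi.star_apply, hMSdef,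
              dotProduct]
            refine Finset.sum_congr rfl fun i _ => ?_
            rw [Finset.mul_sum]
            refine Finset.sum_congr rfl fun i' _ => ?_
            rw [Finset.sum_mul, Finset.mul_sum]
            exact Finset.sum_congr rfl fun j _ => by ring
        _ = ∑ i, ∑ j ∈ S, ∑ i', star (x i) * (G i j * star (G i' j)) * x i' :=
            Finset.sum_congr rfl fun i _ => Finset.sum_comm
        _ = ∑ j ∈ S, ∑ i, ∑ i', star (x i) * (G i j * star (G i' j)) * x i' :=
            Finset.sum_comm
        _ = ∑ j ∈ S, (∑ i, star (x i) * G i j) * (∑ i', star (G i' j) * x i') := by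
            refine Finset.sum_congr rfl fun j _ => ?_
            rw [Finset.sum_mul]
            refine Finset.sum_congr rfl fun i _ => ?_
            rw [Finset.mul_sum]
            exact Finset.sum_congr rfl fun i' _ => by ring
    have h2 : ∀ j, (∑ i, star (x i) * G i j) = star ((Gᴴ *ᵥ x) j) := by
      intro j
      simp only [Matrix.mulVec, dotProduct, conjTranspose_apply, star_sum, star_mul',
        star_star]
      exact Finset.sum_congr rfl fun i _ => mul_comm _ _
    have h3 : ∀ j, (∑ i', star (G i' j) * x i') = (Gᴴ *ᵥ x) j := by
      intro j
      simp only [Matrix.mulVec, dotProduct, conjTranspose_apply]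
    rw [h1, map_sum]
    refine Finset.sum_congr rfl fun j _ => ?_
    rw [h2 j, h3 j, RCLike.star_def, RCLike.conj_mul, ← RCLike.ofReal_pow, RCLike.ofReal_re]
  have hMSmin : ∀ x : Fin k → ℂ,
      sMin hkn.le G * ∑ j, ‖x j‖ ^ 2 ≤ ∑ j ∈ S, ‖(Gᴴ *ᵥ x) j‖ ^ 2 := by
    intro x
    have hmem : S ∈ Finset.univ.filter fun S : Finset (Fin n) => S.card = k := by
      simp [hScard]
    have h1 := Finset.inf'_le
      (fun S : Finset (Fin n) =>
        minEigC (Matrix.of fun i i' => ∑ j ∈ S, G i j * star (G i' j))) hmem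
    have h1' : sMin hkn.le G ≤ ⨅ i, hMSH.eigenvalues i := by
      refine le_trans h1 ?_
      rw [show (Matrix.of fun i i' => ∑ j ∈ S, G i j * star (G i' j)) = MS from rfl]
      unfold minEigC
      rw [dif_pos hMSH]
    calc sMin hkn.le G * ∑ j, ‖x j‖ ^ 2 ≤ (⨅ i, hMSH.eigenvalues i) * ∑ j, ‖x j‖ ^ 2 :=
          mul_le_mul_of_nonneg_right h1' (Finset.sum_nonneg fun j _ => by positivity)
      _ ≤ RCLike.re (star x ⬝ᵥ MS *ᵥ x) := inf_eig_le_quad hMSH x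
      _ = ∑ j ∈ S, ‖(Gᴴ *ᵥ x) j‖ ^ 2 := hMSquad x
  set K : ℝ := (k : ℝ) * M / sMin hkn.le G with hKdef
  have hK : 0 < K := div_pos (mul_pos hkR hM) hsmin
  set lg : ℝ := Real.log γ with hlgdef
  have hlg : lg < 0 := Real.log_neg hγ_pos hγ_lt
  have hloginv : Real.log (1 / γ) = -lg := by rw [one_div, Real.log_inv]
  set Cbig : ℝ := |Real.log ((k : ℝ) * m0)| + (2 * (1 / vmin + 1)) * (-lg) with hCbigdef
  have hmain : ∀ T : ℝ, 1 ≤ T →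
      (2 / vk) * Real.log (1 / γ) - Real.log K / T ≤
        -(1 / T) * Real.log
          (((G * (Matrix.diagonal fun i =>
              ((matC B CE ⌈T / v i⌉₊).trace : ℂ))⁻¹ * Gᴴ)⁻¹).trace.re) ∧
      -(1 / T) * Real.log
          (((G * (Matrix.diagonal fun i =>
              ((matC B CE ⌈T / v i⌉₊).trace : ℂ))⁻¹ * Gᴴ)⁻¹).trace.re) ≤ Cbig := by
    intro T hT1
    have hT : (0:ℝ) < T := lt_of_lt_of_le one_pos hT1
    set t : Fin n → ℝ := fun i => (matC B CE ⌈T / v i⌉₊).trace with htdef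
    have htlow : ∀ i, m0 * γ ^ (2 * ⌈T / v i⌉₊) ≤ t i := fun i => (hbounds _).1
    have htup : ∀ i, t i ≤ M * γ ^ (2 * ⌈T / v i⌉₊) := fun i => (hbounds _).2
    have htpos : ∀ i, 0 < t i := fun i => lt_of_lt_of_le (by positivity) (htlow i)
    set L : ℕ := ⌈T / vk⌉₊ with hLdef
    set Lmax : ℕ := ⌈T / vmin⌉₊ with hLmaxdef
    have hdiaginv : (Matrix.diagonal fun i => ((t i : ℝ) : ℂ))⁻¹
        = Matrix.diagonal fun i => (((t i)⁻¹ : ℝ) : ℂ) := by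
      apply Matrix.inv_eq_right_inv
      rw [Matrix.diagonal_mul_diagonal]
      have he : (fun i => ((t i : ℝ) : ℂ) * (((t i)⁻¹ : ℝ) : ℂ)) = fun _ => (1 : ℂ) := by
        funext i
        rw [← Complex.ofReal_mul, mul_inv_cancel₀ (htpos i).ne']
        simp
      rw [he, Matrix.diagonal_one]
    set A : Matrix (Fin k) (Fin k) ℂ :=
      G * Matrix.diagonal (fun i => (((t i)⁻¹ : ℝ) : ℂ)) * Gᴴ with hAdef
    have hAH : A.IsHermitian := hermitian_GDGH G _
    have hquad : ∀ x : Fin k → ℂ,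
        RCLike.re (star x ⬝ᵥ A *ᵥ x) = ∑ j, (t j)⁻¹ * ‖(Gᴴ *ᵥ x) j‖ ^ 2 :=
      fun x => quad_eqRect G _ x
    have hd : ∀ x : Fin k → ℂ, RCLike.re (star x ⬝ᵥ A *ᵥ x)
        ≤ (m0 * γ ^ (2 * Lmax))⁻¹ * ∑ j, ‖x j‖ ^ 2 := by
      intro x
      rw [hquad x, ← normSq_mulVec_eq G hGG x, Finset.mul_sum]
      apply Finset.sum_le_sum
      intro j _
      apply mul_le_mul_of_nonneg_right _ (by positivity)
      apply inv_anti₀ (by positivity)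
      refine le_trans ?_ (htlow j)
      apply mul_le_mul_of_nonneg_left _ hm0.le
      apply pow_le_pow_of_le_one hγ_pos.le hγ_lt.le
      exact Nat.mul_le_mul_left 2
        (Nat.ceil_le_ceil (div_le_div_of_nonneg_left hT.le hvminpos (hvmin j)))
    have hc : ∀ x : Fin k → ℂ,
        (sMin hkn.le G / (M * γ ^ (2 * L))) * ∑ j, ‖x j‖ ^ 2
          ≤ RCLike.re (star x ⬝ᵥ A *ᵥ x) := by
      intro x
      rw [hquad x]
      have step1 : ∑ j ∈ S, (M * γ ^ (2 * L))⁻¹ * ‖(Gᴴ *ᵥ x) j‖ ^ 2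
          ≤ ∑ j, (t j)⁻¹ * ‖(Gᴴ *ᵥ x) j‖ ^ 2 := by
        refine le_trans (Finset.sum_le_sum fun j hj => ?_)
          (Finset.sum_le_sum_of_subset_of_nonneg (Finset.subset_univ S)
            (fun j _ _ => mul_nonneg (inv_nonneg.mpr (htpos j).le) (by positivity)))
        apply mul_le_mul_of_nonneg_right _ (by positivity)
        apply inv_anti₀ (htpos j)
        refine le_trans (htup j) ?_
        apply mul_le_mul_of_nonneg_left _ hM.le
        apply pow_le_pow_of_le_one hγ_pos.le hγ_lt.le
        exact Nat.mul_le_mul_left 2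
          (Nat.ceil_le_ceil (div_le_div_of_nonneg_left hT.le (hv j) (hSv j hj)))
      refine le_trans ?_ step1
      rw [← Finset.mul_sum]
      have h7 := mul_le_mul_of_nonneg_left (hMSmin x)
        (inv_nonneg.mpr (by positivity : (0:ℝ) ≤ M * γ ^ (2 * L)))
      calc sMin hkn.le G / (M * γ ^ (2 * L)) * ∑ j, ‖x j‖ ^ 2
          = (M * γ ^ (2 * L))⁻¹ * (sMin hkn.le G * ∑ j, ‖x j‖ ^ 2) := by ring
        _ ≤ (M * γ ^ (2 * L))⁻¹ * ∑ j ∈ S, ‖(Gᴴ *ᵥ x) j‖ ^ 2 := h7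
    have hcpos : 0 < sMin hkn.le G / (M * γ ^ (2 * L)) := div_pos hsmin (by positivity)
    obtain ⟨hRlow, hRup⟩ := trace_inv_re_bounds hAH hcpos hc hd
    have hgoalA : G * (Matrix.diagonal fun i =>
        ((matC B CE ⌈T / v i⌉₊).trace : ℂ))⁻¹ * Gᴴ = A := by
      rw [hdiaginv, hAdef]
    rw [hgoalA]
    set R : ℝ := ((A⁻¹).trace).re with hRdef
    have hRR : RCLike.re ((A⁻¹).trace) = R := rfl
    rw [hRR] at hRlow hRup
    have hRlow' : (k : ℝ) * (m0 * γ ^ (2 * Lmax)) ≤ R := by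
      have h20 : (k : ℝ) / (m0 * γ ^ (2 * Lmax))⁻¹ = (k : ℝ) * (m0 * γ ^ (2 * Lmax)) := by
        rw [div_eq_mul_inv, inv_inv]
      rw [← h20]
      exact hRlow
    have hRpos : 0 < R := lt_of_lt_of_le (by positivity) hRlow'
    have hRupK : R ≤ K * γ ^ (2 * L) := by
      refine hRup.trans (le_of_eq ?_)
      rw [div_div_eq_mul_div, hKdef]
      ring
    have hlogR : Real.log R ≤ Real.log K + ((2 * L : ℕ) : ℝ) * lg := by
      refine (Real.log_le_log hRpos hRupK).trans (le_of_eq ?_)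
      rw [Real.log_mul hK.ne' (by positivity), Real.log_pow]
    have hlogRlow : Real.log ((k:ℝ) * m0) + ((2 * Lmax : ℕ) : ℝ) * lg ≤ Real.log R := by
      have h12 : Real.log ((k:ℝ) * (m0 * γ ^ (2 * Lmax)))
          = Real.log ((k:ℝ) * m0) + ((2 * Lmax : ℕ) : ℝ) * lg := by
        rw [show (k:ℝ) * (m0 * γ ^ (2 * Lmax)) = ((k:ℝ) * m0) * γ ^ (2 * Lmax) from by ring,
          Real.log_mul (mul_pos hkR hm0).ne' (by positivity), Real.log_pow]
      rw [← h12]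
      exact Real.log_le_log (by positivity) hRlow'
    constructor
    · rw [hloginv]
      have hLlow : T / vk ≤ (L:ℝ) := Nat.le_ceil _
      have hTLvk : T ≤ (L:ℝ) * vk := (div_le_iff₀ hvk).mp hLlow
      have hLT : 2 / vk ≤ 2 * (L:ℝ) / T := by
        rw [div_le_div_iff₀ hvk hT]
        nlinarith
      have key1 : (2 * (L:ℝ) / T) * lg ≤ (2 / vk) * lg :=
        mul_le_mul_of_nonpos_right hLT hlg.le
      have hmulup := mul_le_mul_of_nonneg_left hlogR (by positivity : (0:ℝ) ≤ 1 / T)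
      have hexpand : (1/T) * (Real.log K + ((2 * L : ℕ) : ℝ) * lg)
          = Real.log K / T + (2 * (L:ℝ) / T) * lg := by
        push_cast
        ring
      rw [hexpand] at hmulup
      linarith
    · have hmul2 := mul_le_mul_of_nonneg_left hlogRlow (by positivity : (0:ℝ) ≤ 1 / T)
      have hexpand2 : (1/T) * (Real.log ((k:ℝ) * m0) + ((2 * Lmax : ℕ) : ℝ) * lg)
          = (1/T) * Real.log ((k:ℝ) * m0) + (2 * (Lmax:ℝ) / T) * lg := by
        push_cast
        ring
      rw [hexpand2] at hmul2
      have e1 : -((1/T) * Real.log ((k:ℝ) * m0)) ≤ |Real.log ((k:ℝ) * m0)| := by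
        have h9 : |1/T * Real.log ((k:ℝ) * m0)| ≤ |Real.log ((k:ℝ) * m0)| := by
          rw [abs_mul]
          refine mul_le_of_le_one_left (abs_nonneg _) ?_
          rw [abs_of_pos (by positivity : (0:ℝ) < 1/T), div_le_one hT]
          exact hT1
        exact (neg_le_abs _).trans h9
      have hLmaxT : 2 * (Lmax:ℝ) / T ≤ 2 * (1/vmin + 1) := by
        have h10 : (Lmax:ℝ) < T/vmin + 1 := Nat.ceil_lt_add_one (by positivity)
        rw [div_le_iff₀ hT]
        have h11 : T/vmin = (1/vmin) * T := by ring
        nlinarith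
      have e2 : (2 * (Lmax:ℝ) / T) * (-lg) ≤ (2 * (1/vmin + 1)) * (-lg) :=
        mul_le_mul_of_nonneg_right hLmaxT (by linarith)
      rw [hCbigdef]
      linarith
  have hev := (eventually_ge_atTop (1:ℝ)).mono hmain
  have hev1 : (fun T : ℝ => (2 / vk) * Real.log (1 / γ) - Real.log K / T) ≤ᶠ[atTop]
      (fun T : ℝ => -(1 / T) * Real.log (((G * (Matrix.diagonal fun i =>
        ((matC B CE ⌈T / v i⌉₊).trace : ℂ))⁻¹ * Gᴴ)⁻¹).trace.re)) :=
    hev.mono fun T h => h.1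
  have hev2 : ∀ᶠ T in atTop, (fun T : ℝ => -(1 / T) * Real.log (((G * (Matrix.diagonal fun i =>
        ((matC B CE ⌈T / v i⌉₊).trace : ℂ))⁻¹ * Gᴴ)⁻¹).trace.re)) T ≤ Cbig :=
    hev.mono fun T h => h.2
  have h0 : Tendsto (fun T : ℝ => Real.log K / T) atTop (𝓝 0) :=
    tendsto_const_nhds.div_atTop tendsto_id
  have hgtend : Tendsto (fun T : ℝ => (2 / vk) * Real.log (1 / γ) - Real.log K / T) atTop
      (𝓝 ((2 / vk) * Real.log (1 / γ))) := by
    simpa using tendsto_const_nhds.sub h0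
  calc (2 / vk) * Real.log (1 / γ)
      = liminf (fun T : ℝ => (2 / vk) * Real.log (1 / γ) - Real.log K / T) atTop :=
        hgtend.liminf_eq.symm
    _ ≤ _ := liminf_le_liminf hev1 hgtend.isBoundedUnder_ge
        (isCoboundedUnder_ge_of_eventually_le atTop hev2)
end
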